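/- arXiv:1905.13393 — 7 statements merged into one kernel-verified Lean document; each statement's English description precedes it below -/
import Mathlib

section
/- Let v be a nonzero element of the algebraic closure K of F_q and let f(x) = (x + 1/x)^2/4. Then f(v) lies in (the image of) F_q if and only if v^{2(q-1)} = 1 or v^{2(q+1)} = 1. -/
open Polynomial

lemma mem_range_iff_pow_card_eq {F : Type*} [Field F] [Fintype F]
    (x : AlgebraicClosure F) :
    x ∈ Set.range (algebraMap F (AlgebraicClosure F)) ↔ x ^ Fintype.card F = x := by
  classical
  set q := Fintype.card F with hqdef
  set φ := algebraMap F (AlgebraicClosure F) with hφdef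
  constructor
  · rintro ⟨a, rfl⟩
    rw [← map_pow, FiniteField.pow_card]
  · intro hx
    have hφ : Function.Injective φ := (algebraMap F (AlgebraicClosure F)).injective
    set p : (AlgebraicClosure F)[X] := X ^ q - X with hp
    have h1 : 1 < q := Fintype.one_lt_card
    have hp0 : p ≠ 0 := by
      intro h
      have := congrArg (fun r => Polynomial.coeff r q) h
      simp only [hp, Polynomial.coeff_sub, Polynomial.coeff_X_pow, Polynomial.coeff_X,
        if_pos rfl, if_neg h1.ne, Polynomial.coeff_zero, sub_zero] at this
      exact one_ne_zero this
    have hdeg : p.natDegree = q := by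
      simpa [hp] using FiniteField.X_pow_card_sub_X_natDegree_eq (AlgebraicClosure F) h1
    set S : Finset (AlgebraicClosure F) := Finset.univ.image φ with hS
    have hScard : S.card = q := by
      rw [hS, Finset.card_image_of_injective _ hφ, Finset.card_univ]
    have hSsub : S ⊆ p.roots.toFinset := by
      intro y hy
      rw [hS, Finset.mem_image] at hy
      obtain ⟨a, -, rfl⟩ := hy
      rw [Multiset.mem_toFinset, Polynomial.mem_roots hp0]
      rw [hp, Polynomial.IsRoot, Polynomial.eval_sub, Polynomial.eval_pow,
        Polynomial.eval_X, ← map_pow, FiniteField.pow_card, sub_self]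
    have hcard : p.roots.toFinset.card ≤ q := by
      calc p.roots.toFinset.card ≤ Multiset.card p.roots := Multiset.toFinset_card_le _
        _ ≤ p.natDegree := Polynomial.card_roots' p
        _ = q := hdeg
    have hEq : S = p.roots.toFinset :=
      Finset.eq_of_subset_of_card_le hSsub (by rw [hScard]; exact hcard)
    have hxr : x ∈ p.roots.toFinset := by
      rw [Multiset.mem_toFinset, Polynomial.mem_roots hp0]
      rw [hp, Polynomial.IsRoot, Polynomial.eval_sub, Polynomial.eval_pow,
        Polynomial.eval_X, hx, sub_self]
    rw [← hEq, hS, Finset.mem_image] at hxr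
    obtain ⟨a, -, ha⟩ := hxr
    exact ⟨a, ha⟩

/-- Let `q` be an odd prime power, `F = F_q`, `K` its algebraic closure,
and `f(x) = (x + 1/x)^2 / 4`. For nonzero `v ∈ K`, `f(v)` lies in the image of `F_q`
if and only if `v ^ (2(q-1)) = 1` or `v ^ (2(q+1)) = 1`. -/
theorem f_mem_iff_root_of_unity {F : Type*} [Field F] [Fintype F]
    (hq : Odd (Fintype.card F)) (v : AlgebraicClosure F) (hv : v ≠ 0) :
    (v + 1 / v) ^ 2 / 4 ∈ Set.range (algebraMap F (AlgebraicClosure F)) ↔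
      (v ^ (2 * (Fintype.card F - 1)) = 1 ∨ v ^ (2 * (Fintype.card F + 1)) = 1) := by
  set q := Fintype.card F with hqdef
  have h1q : 1 < q := Fintype.one_lt_card
  -- characteristic
  set p := ringChar F with hpdef
  haveI hcp : CharP F p := ringChar.charP F
  obtain ⟨n, hpp, hcard⟩ := FiniteField.card F p
  haveI : Fact p.Prime := ⟨hpp⟩
  haveI hK : CharP (AlgebraicClosure F) p :=
    charP_of_injective_algebraMap (algebraMap F (AlgebraicClosure F)).injective p
  rw [← hqdef] at hcard
  have hpodd : p ≠ 2 := by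
    intro h
    rw [Nat.odd_iff] at hq
    have hdvd : 2 ∣ q := by
      rw [hcard, h]
      exact dvd_pow_self 2 n.pos.ne'
    omega
  have h2 : (2 : AlgebraicClosure F) ≠ 0 := by
    apply Ring.two_ne_zero
    rw [ringChar.eq (AlgebraicClosure F) p]
    exact hpodd
  have h4 : (4 : AlgebraicClosure F) ≠ 0 := by
    have : (4 : AlgebraicClosure F) = 2 * 2 := by norm_num
    rw [this]; exact mul_ne_zero h2 h2
  have hfrob : ∀ a b : AlgebraicClosure F, (a + b) ^ q = a ^ q + b ^ q := by
    intro a b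
    rw [hcard]
    exact add_pow_char_pow a b p n
  -- membership criterion
  rw [mem_range_iff_pow_card_eq]
  set w : AlgebraicClosure F := v + 1 / v with hw
  have h4q : (4 : AlgebraicClosure F) ^ q = 4 := by
    rw [(map_ofNat (algebraMap F (AlgebraicClosure F)) 4).symm, ← map_pow, FiniteField.pow_card]
  have step1 : (w ^ 2 / 4) ^ q = w ^ 2 / 4 ↔ (w ^ q) ^ 2 = w ^ 2 := by
    rw [div_pow, h4q, div_eq_div_iff h4 h4, mul_left_inj' h4, pow_right_comm]
  have hwq : w ^ q = v ^ q + 1 / v ^ q := by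
    rw [hw, hfrob, one_div, one_div, inv_pow]
  have hvq : v ^ q ≠ 0 := pow_ne_zero _ hv
  have step2 : (w ^ q) ^ 2 = w ^ 2 ↔ (w ^ q = w ∨ w ^ q = -w) := by
    constructor
    · intro h
      have h0 : (w ^ q - w) * (w ^ q + w) = 0 := by linear_combination h
      rcases mul_eq_zero.mp h0 with h' | h'
      · exact Or.inl (sub_eq_zero.mp h')
      · exact Or.inr (eq_neg_of_add_eq_zero_left h')
    · rintro (h | h) <;> rw [h] <;> ring
  obtain ⟨m, hm⟩ : ∃ m, q = m + 1 := ⟨q - 1, by omega⟩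
  have hm1 : q - 1 = m := by omega
  have hm2 : q + 1 = m + 2 := by omega
  have key1 : w ^ q = w ↔ (v ^ m = 1 ∨ v ^ (m + 2) = 1) := by
    rw [hwq, hw]
    have hid : v ^ q + 1 / v ^ q - (v + 1 / v) = (v ^ m - 1) * (v ^ (m + 2) - 1) / v ^ q := by
      rw [hm]
      field_simp
      ring
    constructor
    · intro h
      have h0 : (v ^ m - 1) * (v ^ (m + 2) - 1) / v ^ q = 0 := by rw [← hid, h, sub_self]
      rw [_root_.div_eq_zero_iff] at h0
      rcases h0 with h0 | h0
      · rcases mul_eq_zero.mp h0 with h' | h'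
        · exact Or.inl (sub_eq_zero.mp h')
        · exact Or.inr (sub_eq_zero.mp h')
      · exact absurd h0 hvq
    · intro h
      have h0 : (v ^ m - 1) * (v ^ (m + 2) - 1) = 0 := by
        rcases h with h | h <;> rw [h] <;> ring
      have := hid
      rw [h0, zero_div, sub_eq_zero] at this
      exact this
  have key2 : w ^ q = -w ↔ (v ^ m = -1 ∨ v ^ (m + 2) = -1) := by
    rw [hwq, hw]
    have hid : v ^ q + 1 / v ^ q + (v + 1 / v) = (v ^ m + 1) * (v ^ (m + 2) + 1) / v ^ q := by
      rw [hm]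
      field_simp
      ring
    constructor
    · intro h
      have h0 : (v ^ m + 1) * (v ^ (m + 2) + 1) / v ^ q = 0 := by
        rw [← hid, h]; ring
      rw [_root_.div_eq_zero_iff] at h0
      rcases h0 with h0 | h0
      · rcases mul_eq_zero.mp h0 with h' | h'
        · exact Or.inl (eq_neg_of_add_eq_zero_left h')
        · exact Or.inr (eq_neg_of_add_eq_zero_left h')
      · exact absurd h0 hvq
    · intro h
      have h0 : (v ^ m + 1) * (v ^ (m + 2) + 1) = 0 := by
        rcases h with h | h <;> rw [h] <;> ring
      have := hid
      rw [h0, zero_div] at this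
      linear_combination this
  have rhs1 : v ^ (2 * (q - 1)) = 1 ↔ (v ^ m = 1 ∨ v ^ m = -1) := by
    rw [hm1, mul_comm, pow_mul, sq_eq_one_iff]
  have rhs2 : v ^ (2 * (q + 1)) = 1 ↔ (v ^ (m + 2) = 1 ∨ v ^ (m + 2) = -1) := by
    rw [hm2, mul_comm, pow_mul, sq_eq_one_iff]
  rw [step1, step2, key1, key2, rhs1, rhs2]
  exact or_or_or_comm
end

section
/- For every τ ∈ F_q there exists a nonzero v in the algebraic closure K of F_q with v^{2(q-1)} = 1 or v^{2(q+1)} = 1 such that (v + 1/v)^2/4 = τ (identifying F_q with its image in K). -/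
/-- Let `q` be an odd prime power, `F = F_q`, `K` its algebraic closure.
For every `τ ∈ F_q` there exists a nonzero `v ∈ K` with `v ^ (2(q-1)) = 1` or
`v ^ (2(q+1)) = 1` such that `(v + 1/v)^2 / 4 = τ` (identifying `F_q` with its image). -/
theorem exists_orbit_rep {F : Type*} [Field F] [Fintype F]
    (hq : Odd (Fintype.card F)) (τ : F) :
    ∃ v : AlgebraicClosure F, v ≠ 0 ∧
      (v ^ (2 * (Fintype.card F - 1)) = 1 ∨ v ^ (2 * (Fintype.card F + 1)) = 1) ∧
      (v + 1 / v) ^ 2 / 4 = algebraMap F (AlgebraicClosure F) τ := by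
  set K := AlgebraicClosure F
  set q := Fintype.card F with hqdef
  set p := ringChar F with hpdef
  haveI : CharP F p := ringChar.charP F
  haveI : CharP K p := charP_of_injective_algebraMap' (A := K) F p
  obtain ⟨n, hp, hcard⟩ := FiniteField.card F p
  haveI : Fact (Nat.Prime p) := ⟨hp⟩
  have hqpos : 0 < q := Fintype.card_pos
  -- p is odd
  have hpne2 : p ≠ 2 := by
    intro h
    rw [hqdef, hcard, h] at hq
    exact Nat.not_even_iff_odd.mpr hq (Nat.even_pow.mpr ⟨even_two, n.pos.ne'⟩)
  have h2 : (2 : K) ≠ 0 := by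
    have := (CharP.cast_eq_zero_iff K p 2)
    intro h
    have hdvd : p ∣ 2 := this.mp (by exact_mod_cast h)
    exact hpne2 ((Nat.prime_dvd_prime_iff_eq hp Nat.prime_two).mp hdvd)
  have h4 : (4 : K) ≠ 0 := by
    have : (4 : K) = 2 * 2 := by norm_num
    rw [this]; exact mul_ne_zero h2 h2
  set τ' : K := algebraMap F K τ with hτ'
  obtain ⟨s, hs⟩ := IsAlgClosed.exists_pow_nat_eq (k := K) τ' zero_lt_two
  obtain ⟨t, ht⟩ := IsAlgClosed.exists_pow_nat_eq (k := K) (s ^ 2 - 1) zero_lt_two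
  set v : K := s + t with hv
  have hvinv : v * (s - t) = 1 := by rw [hv]; linear_combination -ht
  have hv0 : v ≠ 0 := by
    intro h; rw [h, zero_mul] at hvinv; exact zero_ne_one hvinv
  have hinv : 1 / v = s - t := by
    rw [eq_comm, one_div]; exact eq_inv_of_mul_eq_one_right (by linear_combination hvinv)
  have hfrob : (s + t) ^ q = s ^ q + t ^ q := by
    rw [hqdef, hcard]; exact add_pow_char_pow s t p (n:ℕ)
  have hτq : τ' ^ q = τ' := by rw [hτ', hqdef, ← map_pow, FiniteField.pow_card]
  have hs2q : (s ^ 2) ^ q = s ^ 2 := by rw [hs, hτq, ← hs]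
  have hsq : s ^ q = s ∨ s ^ q = -s := by
    have h : (s ^ q - s) * (s ^ q + s) = 0 := by
      have h' : (s ^ q) ^ 2 = s ^ 2 := by
        rw [← pow_mul, mul_comm, pow_mul]; exact hs2q
      linear_combination h'
    rcases mul_eq_zero.mp h with h | h
    · exact Or.inl (by linear_combination h)
    · exact Or.inr (by linear_combination h)
  have htq : t ^ q = t ∨ t ^ q = -t := by
    have h2t : (t ^ q) ^ 2 = t ^ 2 := by
      calc (t ^ q) ^ 2 = (t ^ 2) ^ q := by rw [← pow_mul, ← pow_mul, mul_comm]
        _ = (s ^ 2 - 1) ^ q := by rw [ht]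
        _ = (s ^ 2) ^ q - 1 ^ q := by rw [hqdef, hcard]; exact sub_pow_char_pow (s^2) 1 (n:ℕ)
        _ = t ^ 2 := by rw [hs2q, one_pow, ← ht]
    have h : (t ^ q - t) * (t ^ q + t) = 0 := by linear_combination h2t
    rcases mul_eq_zero.mp h with h | h
    · exact Or.inl (by linear_combination h)
    · exact Or.inr (by linear_combination h)
  have hvq : v ^ q = s ^ q + t ^ q := by rw [hv]; exact hfrob
  have hsub : v ^ (q - 1) * v = v ^ q := by
    rw [← pow_succ, Nat.sub_add_cancel hqpos]
  have hadd : v ^ (q + 1) = v ^ q * v := pow_succ v q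
  refine ⟨v, hv0, ?_, ?_⟩
  · rcases hsq with hS | hS <;> rcases htq with hT | hT
    · -- v^q = v
      left
      have h1 : v ^ (q - 1) = 1 := by
        apply mul_right_cancel₀ hv0
        rw [hsub, hvq, hS, hT, one_mul, hv]
      rw [mul_comm, pow_mul, h1, one_pow]
    · -- v^q = s - t = 1/v
      right
      have h1 : v ^ (q + 1) = 1 := by
        rw [hadd, hvq, hS, hT]
        calc (s + -t) * v = v * (s - t) := by ring
          _ = 1 := hvinv
      rw [mul_comm, pow_mul, h1, one_pow]
    ·
      right
      have h1 : v ^ (q + 1) = -1 := by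
        rw [hadd, hvq, hS, hT]
        calc (-s + t) * v = -(v * (s - t)) := by ring
          _ = -1 := by rw [hvinv]
      rw [mul_comm, pow_mul, h1]; ring
    · -- v^q = -s - t = -v
      left
      have h1 : v ^ (q - 1) = -1 := by
        apply mul_right_cancel₀ hv0
        rw [hsub, hvq, hS, hT, hv]; ring
      rw [mul_comm, pow_mul, h1]; ring
  · rw [hinv, div_eq_iff h4, hv]
    linear_combination (4 : K) * hs
end

section
/- Let τ ∈ F_q with τ ≠ 0 and τ ≠ 1, and let v be a nonzero element of the algebraic closure K of F_q with (v + 1/v)^2 = 4τ. Set A = χ(τ) and B = χ(τ-1), which both lie in {1, -1}. Then v^{q - A·B} = A (where A on the right is viewed as an element of K, and the exponent q - A·B is a positive integer). -/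
open scoped Classical

/-- The Legendre symbol on a finite field: `1` on nonzero squares, `-1` on nonsquares,
`0` at `0`. -/
noncomputable def χ {F : Type*} [Field F] [Fintype F] (a : F) : ℤ :=
  if a = 0 then 0 else if IsSquare a then 1 else -1

section Aux

variable {F : Type*} [Field F] [Fintype F]

lemma euler_chi (hF : ringChar F ≠ 2) {a : F} (ha : a ≠ 0) :
    a ^ (Fintype.card F / 2) = ((χ a : ℤ) : F) := by
  rcases FiniteField.pow_dichotomy hF ha with h | h
  · rw [h, χ, if_neg ha, if_pos ((FiniteField.isSquare_iff hF ha).mpr h)]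
    simp
  · rw [h, χ, if_neg ha, if_neg ?_]
    · simp
    · intro hsq
      rw [(FiniteField.isSquare_iff hF ha).mp hsq] at h
      exact Ring.neg_one_ne_one_of_char_ne_two hF h.symm

lemma pow_card_of_sq (hF : ringChar F ≠ 2) {a : F} (ha : a ≠ 0)
    {x : AlgebraicClosure F} (hx : x ^ 2 = algebraMap F (AlgebraicClosure F) a) :
    x ^ Fintype.card F = ((χ a : ℤ) : AlgebraicClosure F) * x := by
  have hodd := FiniteField.odd_card_of_char_ne_two hF
  have hcard : Fintype.card F = 2 * (Fintype.card F / 2) + 1 := by omega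
  calc x ^ Fintype.card F = (x ^ 2) ^ (Fintype.card F / 2) * x := by
        rw [← pow_mul, ← pow_succ, ← hcard]
    _ = algebraMap F (AlgebraicClosure F) (a ^ (Fintype.card F / 2)) * x := by
        rw [hx, map_pow]
    _ = ((χ a : ℤ) : AlgebraicClosure F) * x := by
        rw [euler_chi hF ha, map_intCast]

lemma chi_four_mul (hF : ringChar F ≠ 2) (a : F) : χ (4 * a) = χ a := by
  have h2 : (2 : F) ≠ 0 := Ring.two_ne_zero hF
  have h4 : (4 : F) ≠ 0 := by
    intro h
    apply h2
    have : (2 : F) * 2 = 0 := by rw [show (2:F)*2 = 4 by norm_num, h]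
    rcases mul_eq_zero.mp this with h | h <;> exact h
  rcases eq_or_ne a 0 with rfl | ha
  · simp [χ]
  · have hiff : IsSquare (4 * a) ↔ IsSquare a := by
      constructor
      · rintro ⟨r, hr⟩
        refine ⟨r / 2, ?_⟩
        field_simp
        linear_combination hr
      · rintro ⟨s, hs⟩
        exact ⟨2 * s, by rw [hs]; ring⟩
    rw [χ, χ, if_neg ha, if_neg (mul_ne_zero h4 ha)]
    simp only [hiff]

lemma chi_pm (a : F) (ha : a ≠ 0) : χ a = 1 ∨ χ a = -1 := by
  rw [χ, if_neg ha]
  split <;> simp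

end Aux

/-- Let `τ ∈ F_q` with `τ ≠ 0, 1`, and let `v` be a nonzero element of the
algebraic closure `K` with `(v + 1/v)^2 = 4τ`.  With `A = χ(τ)` and `B = χ(τ-1)`, we have
`v ^ (q - A·B) = A` (the exponent `q - A·B` being a positive integer, and `A` on the right
viewed in `K`). -/
theorem structure_theorem {F : Type*} [Field F] [Fintype F]
    (hq : Odd (Fintype.card F)) (τ : F) (h0 : τ ≠ 0) (h1 : τ ≠ 1)
    (v : AlgebraicClosure F) (hv : v ≠ 0)
    (hvτ : (v + 1 / v) ^ 2 = algebraMap F (AlgebraicClosure F) (4 * τ)) :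
    v ^ ((Fintype.card F : ℤ) - χ τ * χ (τ - 1)).toNat
      = ((χ τ : ℤ) : AlgebraicClosure F) := by
  have hq1 : 1 ≤ Fintype.card F := Fintype.card_pos
  set q := Fintype.card F with hqdef
  let K := AlgebraicClosure F
  have hF : ringChar F ≠ 2 := by
    intro h
    have := FiniteField.even_card_of_char_two h
    rw [Nat.odd_iff] at hq
    omega
  have h2F : (2 : F) ≠ 0 := Ring.two_ne_zero hF
  have h2K : (2 : K) ≠ 0 := by
    intro h
    apply h2F
    have : algebraMap F K 2 = 0 := by rw [map_ofNat]; exact h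
    exact (map_eq_zero _).mp this
  have hτ1 : τ - 1 ≠ 0 := sub_ne_zero.mpr h1
  -- Frobenius additivity
  haveI : CharP F (ringChar F) := ringChar.charP F
  obtain ⟨n, hp, hcard⟩ := FiniteField.card F (ringChar F)
  haveI : Fact (ringChar F).Prime := ⟨hp⟩
  haveI : CharP K (ringChar F) := charP_of_injective_algebraMap (algebraMap F K).injective _
  have hadd : ∀ x y : K, (x + y) ^ q = x ^ q + y ^ q := by
    intro x y; rw [hqdef, hcard]; exact add_pow_char_pow x y _ _
  have hsub : ∀ x y : K, (x - y) ^ q = x ^ q - y ^ q := by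
    intro x y; rw [hqdef, hcard]; exact sub_pow_char_pow x y _
  have hvv : v * v⁻¹ = 1 := mul_inv_cancel₀ hv
  have hw2 : (v + v⁻¹) ^ 2 = algebraMap F K (4 * τ) := by rwa [one_div] at hvτ
  have hu2 : (v - v⁻¹) ^ 2 = algebraMap F K (4 * (τ - 1)) := by
    have h4 : algebraMap F K (4 * (τ - 1)) = algebraMap F K (4 * τ) - 4 := by
      rw [show (4 : F) * (τ - 1) = 4 * τ - 4 by ring, map_sub, map_ofNat]
    rw [h4, ← hw2]
    linear_combination (-4 : K) * hvv
  have hwq : (v + v⁻¹) ^ q = ((χ τ : ℤ) : K) * (v + v⁻¹) := by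
    have := pow_card_of_sq hF (mul_ne_zero (by
      intro h; apply h2F; have : (2:F)*2 = 0 := by rw [show (2:F)*2 = 4 by norm_num, h]
      rcases mul_eq_zero.mp this with h|h <;> exact h) h0) hw2
    rwa [chi_four_mul hF τ] at this
  have huq : (v - v⁻¹) ^ q = ((χ (τ - 1) : ℤ) : K) * (v - v⁻¹) := by
    have := pow_card_of_sq hF (mul_ne_zero (by
      intro h; apply h2F; have : (2:F)*2 = 0 := by rw [show (2:F)*2 = 4 by norm_num, h]
      rcases mul_eq_zero.mp this with h|h <;> exact h) hτ1) hu2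
    rwa [chi_four_mul hF (τ - 1)] at this
  have eq1 : v ^ q + (v⁻¹) ^ q = ((χ τ : ℤ) : K) * (v + v⁻¹) := by
    rw [← hadd]; exact hwq
  have eq2 : v ^ q - (v⁻¹) ^ q = ((χ (τ - 1) : ℤ) : K) * (v - v⁻¹) := by
    rw [← hsub]; exact huq
  have hA := chi_pm τ h0
  have hB := chi_pm (τ - 1) hτ1
  rcases eq_or_ne (χ τ) (χ (τ - 1)) with hab | hab
  · -- A = B : v^q = A v, exponent q - 1
    have hABK : ((χ (τ - 1) : ℤ) : K) = ((χ τ : ℤ) : K) := by rw [hab]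
    have key : v ^ q = ((χ τ : ℤ) : K) * v := by
      have h2 : 2 * v ^ q = 2 * (((χ τ : ℤ) : K) * v) := by
        rw [hABK] at eq2; linear_combination eq1 + eq2
      exact mul_left_cancel₀ h2K h2
    have hprod : χ τ * χ (τ - 1) = 1 := by
      rw [← hab]; rcases hA with h | h <;> rw [h] <;> norm_num
    rw [hprod]
    have hexp : ((q : ℤ) - 1).toNat = q - 1 := by omega
    rw [hexp]
    have hmul : v ^ (q - 1) * v = ((χ τ : ℤ) : K) * v := by
      rw [← pow_succ, Nat.sub_add_cancel hq1]; exact key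
    exact mul_right_cancel₀ hv hmul
  · -- A = -B : v^q = A v⁻¹, exponent q + 1
    have hABK : ((χ (τ - 1) : ℤ) : K) = -((χ τ : ℤ) : K) := by
      have : χ (τ - 1) = -χ τ := by
        rcases hA with h | h <;> rcases hB with h' | h' <;>
          simp [h, h'] at hab ⊢
      rw [this]; push_cast; ring
    have key : v ^ q = ((χ τ : ℤ) : K) * v⁻¹ := by
      have h2 : 2 * v ^ q = 2 * (((χ τ : ℤ) : K) * v⁻¹) := by
        rw [hABK] at eq2; linear_combination eq1 + eq2
      exact mul_left_cancel₀ h2K h2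
    have hprod : χ τ * χ (τ - 1) = -1 := by
      rcases hA with h | h <;> rcases hB with h' | h' <;>
        simp [h, h'] at hab ⊢
    rw [hprod]
    have hexp : ((q : ℤ) - (-1)).toNat = q + 1 := by omega
    rw [hexp, pow_succ, key, mul_assoc, inv_mul_cancel₀ hv, mul_one]
end

section
/- In F_q[x], D_m(x) = ∏_{b} (x - b), where the product is over all b ∈ F_q such that both 2 - b and 2 + b are nonsquares in F_q, and D_m denotes the image in F_q[x] of the m-th Dickson polynomial of the first kind. -/
open scoped Classical
open Polynomial


/-- The Dickson polynomials of the first kind: `D 0 = 2`, `D 1 = X`,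
`D (k+2) = X * D (k+1) - D k`. -/
noncomputable def dicksonFst : ℕ → Polynomial ℤ
  | 0 => 2
  | 1 => Polynomial.X
  | (k + 2) => Polynomial.X * dicksonFst (k + 1) - dicksonFst k

lemma dicksonFst_eq : ∀ n, dicksonFst n = Polynomial.dickson 1 1 n
  | 0 => by simp [dicksonFst, Polynomial.dickson_zero]; norm_num
  | 1 => by simp [dicksonFst, Polynomial.dickson_one]
  | (n + 2) => by
      rw [dicksonFst, Polynomial.dickson_add_two, dicksonFst_eq (n+1), dicksonFst_eq n]
      simp

lemma dickson_monic_deg : ∀ n : ℕ,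
    (Polynomial.dickson 1 1 (n+1) : Polynomial ℤ).Monic ∧
      (Polynomial.dickson 1 1 (n+1) : Polynomial ℤ).degree = (n+1 : ℕ)
  | 0 => ⟨monic_X, degree_X⟩
  | 1 => by
      have h : (Polynomial.dickson 1 1 2 : ℤ[X]) = X^2 - C 2 := by
        rw [Polynomial.dickson_two]; push_cast; ring_nf; simp [Polynomial.C_eq_natCast]
      rw [show ((1:ℕ)+1) = 2 from rfl, h]
      exact ⟨monic_X_pow_sub_C _ two_ne_zero, by rw [degree_X_pow_sub_C (by norm_num)]⟩
  | (n + 2) => by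
      obtain ⟨h1m, h1d⟩ := dickson_monic_deg (n+1)
      obtain ⟨h0m, h0d⟩ := dickson_monic_deg n
      rw [Polynomial.dickson_add_two]
      have hQm : (X * Polynomial.dickson 1 1 (n+2) : ℤ[X]).Monic := monic_X.mul h1m
      have hQd : (X * Polynomial.dickson 1 1 (n+2) : ℤ[X]).degree = ((n+3 : ℕ) : WithBot ℕ) := by
        rw [degree_mul, degree_X, h1d]
        push_cast; ring
      have hlt : (C 1 * Polynomial.dickson 1 1 (n+1) : ℤ[X]).degree
          < (X * Polynomial.dickson 1 1 (n+2) : ℤ[X]).degree := by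
        rw [hQd, C_1, one_mul, h0d]
        exact_mod_cast by omega
      constructor
      · exact hQm.sub_of_left hlt
      · rw [degree_sub_eq_left_of_degree_lt hlt, hQd]


lemma qsum {F : Type*} [Field F] [Fintype F] [DecidableEq F] (hF : ringChar F ≠ 2) {c : F}
    (hc : c ≠ 0) : ∑ x : F, quadraticChar F (x * (x + c)) = -1 := by
  have h0 : quadraticChar F (0 * (0 + c)) = 0 := by simp
  rw [← Finset.add_sum_erase _ _ (Finset.mem_univ (0:F)), h0, zero_add]
  have h1 : ∀ x ∈ Finset.univ.erase (0:F),
      quadraticChar F (x * (x + c)) = quadraticChar F (1 + c * x⁻¹) := by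
    intro x hx
    have hx0 : x ≠ 0 := Finset.ne_of_mem_erase hx
    have : x * (x + c) = x^2 * (1 + c * x⁻¹) := by field_simp
    rw [this, map_mul, quadraticChar_sq_one' hx0, one_mul]
  rw [Finset.sum_congr rfl h1]
  have h2 : ∑ x ∈ Finset.univ.erase (0:F), quadraticChar F (1 + c * x⁻¹)
      = ∑ t ∈ Finset.univ.erase (1:F), quadraticChar F t := by
    apply Finset.sum_nbij' (fun x => 1 + c * x⁻¹) (fun t => c * (t - 1)⁻¹)
    · intro x hx
      have hx0 : x ≠ 0 := Finset.ne_of_mem_erase hx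
      simp only [Finset.mem_erase, Finset.mem_univ, and_true]
      intro h
      have : c * x⁻¹ = 0 := by linear_combination h
      simp [hc, hx0] at this
    · intro t ht
      have ht1 : t ≠ 1 := Finset.ne_of_mem_erase ht
      have : t - 1 ≠ 0 := sub_ne_zero.mpr ht1
      simp only [Finset.mem_erase, Finset.mem_univ, and_true]
      exact mul_ne_zero hc (inv_ne_zero this)
    · intro x hx
      have hx0 : x ≠ 0 := Finset.ne_of_mem_erase hx
      field_simp
      rw [add_sub_cancel_left, div_self hc]
    · intro t ht
      have ht1 : t ≠ 1 := Finset.ne_of_mem_erase ht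
      have h1 : t - 1 ≠ 0 := sub_ne_zero.mpr ht1
      field_simp
      ring
    · intro x hx
      rfl
  rw [h2]
  have h3 := quadraticChar_sum_zero (F := F) hF
  rw [← Finset.add_sum_erase _ _ (Finset.mem_univ (1:F))] at h3
  have h4 : quadraticChar F 1 = 1 := map_one _
  omega

lemma card_S {F : Type*} [Field F] [Fintype F] [DecidableEq F] (hF : ringChar F ≠ 2) :
    4 * ((Finset.univ.filter (fun b : F => ¬ IsSquare (2 - b) ∧ ¬ IsSquare (2 + b))).card : ℤ)
      = Fintype.card F - quadraticChar F (-1) := by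
  have h2 : (2 : F) ≠ 0 := Ring.two_ne_zero hF
  have h4 : (4 : F) ≠ 0 := by
    intro h
    have : (2:F) * 2 = 0 := by norm_num; exact h
    simp [h2] at this
  have key : ∀ b : F, (1 - quadraticChar F (2 - b)) * (1 - quadraticChar F (2 + b))
      = if (¬ IsSquare ((2:F) - b) ∧ ¬ IsSquare ((2:F) + b)) then 4 else 0 := by
    intro b
    by_cases hb : (¬ IsSquare ((2:F) - b) ∧ ¬ IsSquare ((2:F) + b))
    · rw [if_pos hb, quadraticChar_neg_one_iff_not_isSquare.mpr hb.1,
        quadraticChar_neg_one_iff_not_isSquare.mpr hb.2]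
      norm_num
    · rw [if_neg hb]
      rw [not_and_or, not_not, not_not] at hb
      rcases hb with hb | hb
      · by_cases h0 : (2:F) - b = 0
        · have hb2 : b = 2 := by linear_combination -h0
          have : (2:F) + b = 2^2 := by rw [hb2]; norm_num
          rw [this, quadraticChar_sq_one' h2]
          ring
        · rw [(quadraticChar_one_iff_isSquare h0).mpr hb]; ring
      · by_cases h0 : (2:F) + b = 0
        · have hb2 : b = -2 := by linear_combination h0
          have : (2:F) - b = 2^2 := by rw [hb2]; norm_num
          rw [this, quadraticChar_sq_one' h2]
          ring
        · rw [(quadraticChar_one_iff_isSquare h0).mpr hb]; ring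
  have lhs : ∑ b : F, (1 - quadraticChar F (2 - b)) * (1 - quadraticChar F (2 + b))
      = 4 * ((Finset.univ.filter (fun b : F => ¬ IsSquare (2 - b) ∧ ¬ IsSquare (2 + b))).card : ℤ) := by
    rw [Finset.sum_congr rfl (fun b _ => key b), Finset.sum_ite, Finset.sum_const,
      Finset.sum_const_zero, add_zero, nsmul_eq_mul]
    ring
  rw [← lhs]
  have e1 : ∑ b : F, quadraticChar F (2 - b) = 0 := by
    rw [← quadraticChar_sum_zero (F := F) hF]
    exact Fintype.sum_equiv (Equiv.subLeft (2:F)) _ _ (fun b => rfl)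
  have e2 : ∑ b : F, quadraticChar F (2 + b) = 0 := by
    rw [← quadraticChar_sum_zero (F := F) hF]
    exact Fintype.sum_equiv (Equiv.addLeft (2:F)) _ _ (fun b => rfl)
  have e3 : ∑ b : F, quadraticChar F ((2 - b) * (2 + b)) = - quadraticChar F (-1) := by
    have := qsum (F := F) hF (c := -4) (neg_ne_zero.mpr h4)
    calc ∑ b : F, quadraticChar F ((2 - b) * (2 + b))
        = ∑ x : F, quadraticChar F ((2 - (x - 2)) * (2 + (x - 2))) :=
          (Fintype.sum_equiv (Equiv.subRight (2:F)) _ _ (fun x => rfl)).symm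
      _ = ∑ x : F, quadraticChar F (-1) * quadraticChar F (x * (x + (-4))) := by
          apply Finset.sum_congr rfl
          intro x _
          rw [← map_mul]
          congr 1
          ring
      _ = quadraticChar F (-1) * ∑ x : F, quadraticChar F (x * (x + (-4))) := by
          rw [Finset.mul_sum]
      _ = - quadraticChar F (-1) := by rw [this]; ring
  have expand : ∀ b : F, (1 - quadraticChar F (2 - b)) * (1 - quadraticChar F (2 + b))
      = 1 - quadraticChar F (2 - b) - quadraticChar F (2 + b)
        + quadraticChar F ((2 - b) * (2 + b)) := by
    intro b; rw [map_mul]; ring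
  rw [Finset.sum_congr rfl (fun b _ => expand b)]
  rw [Finset.sum_add_distrib, Finset.sum_sub_distrib, Finset.sum_sub_distrib, e1, e2, e3,
    Finset.sum_const, Finset.card_univ, nsmul_eq_mul, mul_one]
  ring


lemma pow_half_eq_neg_one {F : Type*} [Field F] [Fintype F] (hF : ringChar F ≠ 2) {a : F}
    (ha : a ≠ 0) (h : ¬IsSquare a) : a ^ (Fintype.card F / 2) = -1 := by
  have h1 : a ^ (Fintype.card F / 2) ≠ 1 := fun h' => h ((FiniteField.isSquare_iff hF ha).mpr h')
  have hodd : Odd (Fintype.card F) := Nat.odd_iff.mpr (FiniteField.odd_card_of_char_ne_two hF)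
  have hc1 : 1 ≤ Fintype.card F := Fintype.card_pos
  have hsq : (a ^ (Fintype.card F / 2)) ^ 2 = 1 := by
    rw [← pow_mul]
    have h2 : Fintype.card F / 2 * 2 = Fintype.card F - 1 := by
      obtain ⟨t, ht⟩ := hodd; omega
    rw [h2]
    exact FiniteField.pow_card_sub_one_eq_one a ha
  have hz : (a ^ (Fintype.card F / 2) - 1) * (a ^ (Fintype.card F / 2) + 1) = 0 := by
    linear_combination hsq
  rcases mul_eq_zero.mp hz with h' | h'
  · exact absurd (by linear_combination h') h1
  · linear_combination h'

/-- The square-discriminant case: `q = 4m+1`. -/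
lemma eval_dickson_zero_sq {F : Type*} [Field F] [Fintype F] (hF : ringChar F ≠ 2) {m : ℕ}
    (hq : Fintype.card F = 4 * m + 1) {b : F} (hb : ¬IsSquare (2 + b))
    (hd : IsSquare (b ^ 2 - 4)) : (Polynomial.dickson 1 1 m : F[X]).eval b = 0 := by
  have h2 : (2 : F) ≠ 0 := Ring.two_ne_zero hF
  have hb2 : (2 : F) + b ≠ 0 := by
    intro h; exact hb ⟨0, by rw [h]; ring⟩
  obtain ⟨c, hc⟩ := hd
  have hyy : (b + c) / 2 * ((b - c) / 2) = 1 := by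
    field_simp
    linear_combination hc
  set y : F := (b + c) / 2 with hy_def
  have hy0 : y ≠ 0 := left_ne_zero_of_mul_eq_one hyy
  have hyinv : y⁻¹ = (b - c) / 2 := inv_eq_of_mul_eq_one_right hyy
  have hby : b = y + y⁻¹ := by rw [hyinv, hy_def]; field_simp; ring
  have hy1 : y + 1 ≠ 0 := by
    intro h
    have hym : y = -1 := by linear_combination h
    apply hb2
    rw [hby, hym]
    norm_num
  have h2b : 2 + b = y⁻¹ * (y + 1) ^ 2 := by
    rw [hby]
    field_simp
    ring
  have hpow : (2 + b) ^ (2 * m) = -1 := by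
    have := pow_half_eq_neg_one hF hb2 hb
    rwa [hq, show (4 * m + 1) / 2 = 2 * m by omega] at this
  have hkey : ((2 + b) * y) ^ (2 * m) * (y + 1) ^ 2 = (y + 1) ^ 2 := by
    have h1 : (2 + b) * y = (y + 1) ^ 2 := by
      rw [h2b]; field_simp
    rw [h1, ← pow_mul, ← pow_add]
    have h3 : 2 * (2 * m) + 2 = Fintype.card F + 1 := by omega
    rw [h3, pow_succ, FiniteField.pow_card, ← pow_two]
  have hy2m : y ^ (2 * m) = -1 := by
    have hcancel : ((2 + b) * y) ^ (2 * m) = 1 :=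
      mul_right_cancel₀ (pow_ne_zero 2 hy1) (by rw [hkey, one_mul])
    rw [mul_pow, hpow, neg_one_mul, neg_eq_iff_eq_neg] at hcancel
    exact hcancel
  have heval := Polynomial.dickson_one_one_eval_add_inv y y⁻¹ (mul_inv_cancel₀ hy0) m
  rw [← hby] at heval
  rw [heval]
  have e1 : y ^ m * y⁻¹ ^ m = 1 := by rw [← mul_pow, mul_inv_cancel₀ hy0, one_pow]
  have e2 : y ^ m * y ^ m = -1 := by rw [← pow_add, show m + m = 2 * m by ring, hy2m]
  have hprod : y ^ m * (y ^ m + y⁻¹ ^ m) = 0 := by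
    rw [mul_add, e1, e2]; norm_num
  rcases mul_eq_zero.mp hprod with h | h
  · exact absurd h (pow_ne_zero m hy0)
  · exact h

/-- The nonsquare-discriminant case: `q + 1 = 4m`. -/
lemma eval_dickson_zero_nonsq {F : Type*} [Field F] [Fintype F] (hF : ringChar F ≠ 2) {m : ℕ}
    (hm0 : 0 < m) (hq : Fintype.card F + 1 = 4 * m) {b : F} (hb : ¬IsSquare (2 + b))
    (hd : ¬IsSquare (b ^ 2 - 4)) : (Polynomial.dickson 1 1 m : F[X]).eval b = 0 := by
  have h2 : (2 : F) ≠ 0 := Ring.two_ne_zero hF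
  have hb2 : (2 : F) + b ≠ 0 := fun h => hb ⟨0, by rw [h]; ring⟩
  set d : F := b ^ 2 - 4 with hd_def
  have hd0 : d ≠ 0 := fun h => hd ⟨0, by rw [h]; ring⟩
  -- the quadratic extension
  have hirr : Irreducible (X ^ 2 - C d : F[X]) := by
    apply X_pow_sub_C_irreducible_of_prime Nat.prime_two
    intro r hr
    exact hd ⟨r, by rw [← hr]; ring⟩
  letI := Fact.mk hirr
  set K := AdjoinRoot (X ^ 2 - C d : F[X]) with hK_def
  set φ : F →+* K := algebraMap F K with hφ_def
  have hinj : Function.Injective φ := φ.injective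
  have hφ2 : φ 2 = 2 := map_ofNat φ 2
  set s : K := AdjoinRoot.root (X ^ 2 - C d : F[X]) with hs_def
  have hs2 : s ^ 2 = φ d := by
    have h := AdjoinRoot.eval₂_root (X ^ 2 - C d : F[X])
    simp only [eval₂_sub, eval₂_pow, eval₂_X, eval₂_C] at h
    rw [sub_eq_zero] at h
    exact h.trans rfl
  have h2K : (2 : K) ≠ 0 := by
    rw [← hφ2]
    exact fun h => h2 (hinj (by rw [h, map_zero]))
  -- Frobenius facts
  set q := Fintype.card F with hq_def
  have hφq : ∀ a : F, φ a ^ q = φ a := by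
    intro a; rw [← map_pow, FiniteField.pow_card]
  have h2q : (2 : K) ^ q = 2 := by
    have := hφq 2; rwa [hφ2] at this
  obtain ⟨p, hpCharF⟩ := CharP.exists F
  haveI : CharP F p := hpCharF
  haveI hpFact : Fact p.Prime := ⟨CharP.char_is_prime F p⟩
  haveI : CharP K p := charP_of_injective_algebraMap hinj p
  obtain ⟨n, hpp, hcard⟩ := FiniteField.card F p
  have hfrob : ∀ x y : K, (x + y) ^ q = x ^ q + y ^ q := by
    intro x y
    rw [hq_def, hcard]
    exact add_pow_char_pow x y p n
  -- d is a nonsquare, so d ^ (q/2) = -1 and s ^ q = -s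
  have hdpow : d ^ (q / 2) = -1 := pow_half_eq_neg_one hF hd0 hd
  have hqodd : q % 2 = 1 := FiniteField.odd_card_of_char_ne_two hF
  have hsq : s ^ q = -s := by
    have hq2 : q = 2 * (q / 2) + 1 := by omega
    calc s ^ q = (s ^ 2) ^ (q / 2) * s := by rw [← pow_mul, ← pow_succ, ← hq2]
    _ = φ (d ^ (q / 2)) * s := by rw [hs2, map_pow]
    _ = -s := by rw [hdpow]; simp; exact neg_one_mul s
  clear_value s
  -- the root y of X^2 - bX + 1 in K
  have hyy : (φ b + s) / 2 * ((φ b - s) / 2) = 1 := by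
    rw [div_mul_div_comm, div_eq_one_iff_eq (mul_ne_zero h2K h2K)]
    have h1 : (φ b + s) * (φ b - s) = φ b ^ 2 - s ^ 2 := by ring
    rw [h1, hs2, ← map_pow, ← map_sub, show b ^ 2 - d = 4 from by rw [hd_def]; ring]
    rw [map_ofNat]
    norm_num
  set y : K := (φ b + s) / 2 with hy_def
  have hy0 : y ≠ 0 := left_ne_zero_of_mul_eq_one hyy
  have hyinv : y⁻¹ = (φ b - s) / 2 := inv_eq_of_mul_eq_one_right hyy
  have hby : φ b = y + y⁻¹ := by rw [hyinv, hy_def]; rw [← add_div, eq_div_iff h2K]; ring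
  have hyq : y ^ q = y⁻¹ := by
    rw [hy_def, div_pow, hfrob, hφq, hsq, h2q, hyinv]
    ring
  clear_value y
  have hy1 : y + 1 ≠ 0 := by
    intro h
    have hym : y = -1 := by linear_combination h
    have hbm : φ b = φ (-2) := by
      rw [hby, hym, map_neg, hφ2]; norm_num
    have : b = -2 := hinj hbm
    exact hb2 (by rw [this]; ring)
  have h2b : φ (2 + b) = y⁻¹ * (y + 1) ^ 2 := by
    rw [map_add, hby, hφ2]
    linear_combination (-(2 + y)) * mul_inv_cancel₀ hy0
  have hpow : φ (2 + b) ^ (2 * m - 1) = -1 := by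
    have h := pow_half_eq_neg_one hF hb2 hb
    have hq2 : Fintype.card F / 2 = 2 * m - 1 := by omega
    rw [hq2] at h
    rw [← map_pow, h, map_neg, map_one]
  -- the key computation
  have hkey : (φ (2 + b) * y) ^ (2 * m - 1) * (y + 1) ^ 2 = y⁻¹ * (y + 1) ^ 2 := by
    have h1 : φ (2 + b) * y = (y + 1) ^ 2 := by
      rw [h2b, mul_comm, ← mul_assoc, mul_inv_cancel₀ hy0, one_mul]
    rw [h1, ← pow_mul, ← pow_add]
    have h3 : 2 * (2 * m - 1) + 2 = q + 1 := by omega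
    rw [h3, pow_succ, hfrob, hyq, one_pow]
    linear_combination (-(y + 1)) * mul_inv_cancel₀ hy0
  have hy2m : y ^ (2 * m) = -1 := by
    have hcancel : φ (2 + b) ^ (2 * m - 1) * y ^ (2 * m - 1) = y⁻¹ := by
      have h := mul_right_cancel₀ (pow_ne_zero 2 hy1) hkey
      rw [mul_pow] at h
      exact h
    rw [hpow, neg_one_mul] at hcancel
    have h6 : y ^ (2 * m - 1) = -y⁻¹ := by linear_combination -hcancel
    have h5 : y ^ (2 * m) = y ^ (2 * m - 1) * y := by
      rw [← pow_succ]
      congr 1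
      omega
    rw [h5, h6, neg_mul, inv_mul_cancel₀ hy0]
  -- conclude
  have heval := Polynomial.dickson_one_one_eval_add_inv y y⁻¹ (mul_inv_cancel₀ hy0) m
  rw [← hby] at heval
  have e1 : y ^ m * y⁻¹ ^ m = 1 := by rw [← mul_pow, mul_inv_cancel₀ hy0, one_pow]
  have e2 : y ^ m * y ^ m = -1 := by rw [← pow_add, show m + m = 2 * m by ring, hy2m]
  have hzero : y ^ m + y⁻¹ ^ m = 0 := by
    have hprod : y ^ m * (y ^ m + y⁻¹ ^ m) = 0 := by rw [mul_add, e1, e2]; norm_num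
    rcases mul_eq_zero.mp hprod with h | h
    · exact absurd h (pow_ne_zero m hy0)
    · exact h
  -- transfer back to F
  have htrans : φ ((Polynomial.dickson 1 1 m : F[X]).eval b)
      = (Polynomial.dickson 1 1 m : K[X]).eval (φ b) := by
    rw [← Polynomial.eval₂_at_apply, ← Polynomial.eval_map, Polynomial.map_dickson, map_one]
  apply hinj
  rw [htrans, map_zero, heval, hzero]

lemma final_step {F : Type*} [Field F] [DecidableEq F] (S : Finset F) (D : F[X])
    (hMonic : D.Monic) (hdeg : D.natDegree = S.card) (hroots : ∀ b ∈ S, D.eval b = 0) :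
    D = ∏ b ∈ S, (X - C b) := by
  have hD0 : D ≠ 0 := hMonic.ne_zero
  have hle : S.val ≤ D.roots := by
    rw [Multiset.le_iff_subset S.nodup]
    intro a ha
    rw [Polynomial.mem_roots hD0]
    exact hroots a ha
  have hdvd : (S.val.map (fun a => X - C a)).prod ∣ D :=
    (Multiset.prod_X_sub_C_dvd_iff_le_roots hD0 _).mpr hle
  have hprod_eq : ∏ b ∈ S, (X - C b) = (S.val.map (fun a => X - C a)).prod := rfl
  have hProdMonic : (∏ b ∈ S, (X - C b : F[X])).Monic :=
    monic_prod_of_monic S _ (fun b _ => monic_X_sub_C b)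
  have hProdDeg : (∏ b ∈ S, (X - C b : F[X])).natDegree = S.card := by
    rw [Polynomial.natDegree_prod_of_monic S _ (fun b _ => monic_X_sub_C b)]
    simp [Polynomial.natDegree_X_sub_C]
  rw [hprod_eq] at hProdMonic hProdDeg ⊢
  exact eq_of_monic_of_dvd_of_natDegree_le hProdMonic hMonic hdvd (by rw [hdeg, hProdDeg])

/-- With `ε = (-1)^((q-1)/2)` and `m = (q - ε)/4` (a positive integer),
in `F_q[x]` we have `D_m(x) = ∏ (x - b)`, the product over all `b ∈ F_q` such that
both `2 - b` and `2 + b` are nonsquares in `F_q`. -/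
theorem dickson_factorization {F : Type*} [Field F] [Fintype F]
    (hq : Odd (Fintype.card F)) (m : ℕ) (hm0 : 0 < m)
    (hm : 4 * (m : ℤ) = (Fintype.card F : ℤ) - (-1) ^ ((Fintype.card F - 1) / 2)) :
    (dicksonFst m).map (Int.castRingHom F) =
      ∏ b ∈ Finset.univ.filter (fun b : F => ¬ IsSquare (2 - b) ∧ ¬ IsSquare (2 + b)),
        (Polynomial.X - Polynomial.C b) := by
  classical
  have hF2 : ringChar F ≠ 2 := by
    intro h
    have heven := FiniteField.even_card_of_char_two h
    rw [Nat.odd_iff] at hq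
    omega
  set q := Fintype.card F with hq_def
  set S := Finset.univ.filter (fun b : F => ¬ IsSquare (2 - b) ∧ ¬ IsSquare (2 + b)) with hS_def
  rw [dicksonFst_eq, Polynomial.map_dickson]
  rw [show (Int.castRingHom F) 1 = 1 from map_one _]
  obtain ⟨m', rfl⟩ : ∃ m', m = m' + 1 := ⟨m - 1, by omega⟩
  obtain ⟨hMonicZ, hDegZ⟩ := dickson_monic_deg m'
  have hmap : (Polynomial.dickson 1 1 (m' + 1) : Polynomial ℤ).map (Int.castRingHom F)
      = (Polynomial.dickson 1 1 (m' + 1) : F[X]) := by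
    rw [Polynomial.map_dickson, show (Int.castRingHom F) 1 = 1 from map_one _]
  have hMonic : (Polynomial.dickson 1 1 (m' + 1) : F[X]).Monic :=
    hmap ▸ hMonicZ.map (Int.castRingHom F)
  have hNatDegZ : (Polynomial.dickson 1 1 (m' + 1) : Polynomial ℤ).natDegree = m' + 1 :=
    Polynomial.natDegree_eq_of_degree_eq_some hDegZ
  have hDeg : (Polynomial.dickson 1 1 (m' + 1) : F[X]).natDegree = m' + 1 := by
    rw [← hmap, hMonicZ.natDegree_map, hNatDegZ]
  set m := m' + 1
  -- identify quadraticChar F (-1) with the sign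
  have hcount := card_S (F := F) hF2
  rw [← hS_def, ← hq_def] at hcount
  have hqodd : q % 2 = 1 := Nat.odd_iff.mp hq
  have hq1 : 1 ≤ q := Fintype.card_pos
  rcases Nat.even_or_odd ((q - 1) / 2) with he | he
  · -- ε = 1, q = 4m + 1
    rw [Even.neg_one_pow he] at hm
    have hq4 : q = 4 * m + 1 := by omega
    have hneg1 : IsSquare (-1 : F) := FiniteField.isSquare_neg_one_iff.mpr (by omega)
    have hchi : quadraticChar F (-1) = 1 :=
      (quadraticChar_one_iff_isSquare (neg_ne_zero.mpr one_ne_zero)).mpr hneg1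
    rw [hchi] at hcount
    have hcard : S.card = m := by omega
    apply final_step S _ hMonic (by rw [hDeg, hcard])
    intro b hb
    rw [hS_def, Finset.mem_filter] at hb
    obtain ⟨-, hb1, hb2⟩ := hb
    have hne1 : (2 : F) - b ≠ 0 := fun h => hb1 (h ▸ ⟨0, by ring⟩)
    have hne2 : (2 : F) + b ≠ 0 := fun h => hb2 (h ▸ ⟨0, by ring⟩)
    have hdne : b ^ 2 - 4 ≠ 0 := by
      intro h
      have : ((2 : F) - b) * ((2 : F) + b) = 0 := by linear_combination -h
      rcases mul_eq_zero.mp this with h' | h'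
      exacts [hne1 h', hne2 h']
    have hdsq : IsSquare (b ^ 2 - 4) := by
      apply (quadraticChar_one_iff_isSquare hdne).mp
      have hfac : b ^ 2 - 4 = (-1) * ((2 - b) * (2 + b)) := by ring
      rw [hfac, map_mul, map_mul, hchi, quadraticChar_neg_one_iff_not_isSquare.mpr hb1,
        quadraticChar_neg_one_iff_not_isSquare.mpr hb2]
      norm_num
    exact eval_dickson_zero_sq hF2 hq4 hb2 hdsq
  · -- ε = -1, q + 1 = 4m
    rw [Odd.neg_one_pow he] at hm
    have hq4 : q + 1 = 4 * m := by omega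
    have hneg1 : ¬IsSquare (-1 : F) := by
      rw [FiniteField.isSquare_neg_one_iff]
      push_neg
      omega
    have hchi : quadraticChar F (-1) = -1 :=
      quadraticChar_neg_one_iff_not_isSquare.mpr hneg1
    rw [hchi] at hcount
    have hcard : S.card = m := by omega
    apply final_step S _ hMonic (by rw [hDeg, hcard])
    intro b hb
    rw [hS_def, Finset.mem_filter] at hb
    obtain ⟨-, hb1, hb2⟩ := hb
    have hne1 : (2 : F) - b ≠ 0 := fun h => hb1 (h ▸ ⟨0, by ring⟩)
    have hne2 : (2 : F) + b ≠ 0 := fun h => hb2 (h ▸ ⟨0, by ring⟩)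
    have hdne : b ^ 2 - 4 ≠ 0 := by
      intro h
      have : ((2 : F) - b) * ((2 : F) + b) = 0 := by linear_combination -h
      rcases mul_eq_zero.mp this with h' | h'
      exacts [hne1 h', hne2 h']
    have hdsq : ¬IsSquare (b ^ 2 - 4) := by
      rw [← quadraticChar_neg_one_iff_not_isSquare]
      have hfac : b ^ 2 - 4 = (-1) * ((2 - b) * (2 + b)) := by ring
      rw [hfac, map_mul, map_mul, hchi, quadraticChar_neg_one_iff_not_isSquare.mpr hb1,
        quadraticChar_neg_one_iff_not_isSquare.mpr hb2]
      norm_num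
    exact eval_dickson_zero_nonsq hF2 hm0 hq4 hb2 hdsq
end

section
/- The product of all a ∈ F_q such that both a and 4 - a are nonsquares in F_q equals 2. -/
open scoped Classical

open Finset Polynomial

section Aux

variable {F : Type*} [Field F] [Fintype F]

private lemma aux_char (hq : Odd (Fintype.card F)) : ringChar F ≠ 2 := by
  intro h
  have h2 := FiniteField.even_card_of_char_two (F := F) h
  rw [Nat.odd_iff] at hq
  omega

private lemma aux_ns_ne_zero {a : F} (ha : ¬ IsSquare a) : a ≠ 0 := by
  rintro rfl
  exact ha ⟨0, by ring⟩

private lemma aux_mul_ns_sq [DecidableEq F] {a b : F} (ha : ¬ IsSquare a) (hb : IsSquare b)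
    (hb0 : b ≠ 0) : ¬ IsSquare (a * b) := by
  rw [← quadraticChar_neg_one_iff_not_isSquare] at ha ⊢
  rw [map_mul, ha, (quadraticChar_one_iff_isSquare hb0).mpr hb]
  ring

private lemma aux_mul_not_sq [DecidableEq F] {a b : F} (h : ¬ IsSquare (a * b)) :
    a ≠ 0 ∧ b ≠ 0 ∧ (¬ IsSquare a ↔ IsSquare b) := by
  have hab : a * b ≠ 0 := aux_ns_ne_zero h
  have ha : a ≠ 0 := left_ne_zero_of_mul hab
  have hb : b ≠ 0 := right_ne_zero_of_mul hab
  rw [← quadraticChar_neg_one_iff_not_isSquare, map_mul] at h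
  refine ⟨ha, hb, ?_⟩
  rcases quadraticChar_dichotomy ha with h1 | h1 <;>
    rcases quadraticChar_dichotomy hb with h2 | h2
  · rw [h1, h2] at h; norm_num at h
  · exact iff_of_false (not_not.mpr ((quadraticChar_one_iff_isSquare ha).mp h1))
      (quadraticChar_neg_one_iff_not_isSquare.mp h2)
  · exact iff_of_true (quadraticChar_neg_one_iff_not_isSquare.mp h1)
      ((quadraticChar_one_iff_isSquare hb).mp h2)
  · rw [h1, h2] at h; norm_num at h

private lemma aux_card_ns [DecidableEq F] (hq : Odd (Fintype.card F)) :
    (univ.filter (fun a : F => ¬ IsSquare a)).card = Fintype.card F / 2 := by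
  have hchar := aux_char hq
  have h0 : ∑ a : F, quadraticChar F a = 0 := quadraticChar_sum_zero hchar
  rw [← Finset.add_sum_erase _ _ (mem_univ (0 : F)), quadraticChar_zero, zero_add] at h0
  rw [← Finset.sum_filter_add_sum_filter_not (univ.erase (0 : F))
    (fun a => IsSquare a)] at h0
  have hs : ∑ a ∈ (univ.erase (0 : F)).filter (fun a => IsSquare a), quadraticChar F a
      = (((univ.erase (0 : F)).filter (fun a => IsSquare a)).card : ℤ) := by
    rw [Finset.sum_congr rfl (g := fun _ => (1 : ℤ)) (fun a ha => ?_), Finset.sum_const,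
      nsmul_eq_mul, mul_one]
    simp only [mem_filter, mem_erase, mem_univ, true_and] at ha
    exact (quadraticChar_one_iff_isSquare ha.1.1).mpr ha.2
  have hn : ∑ a ∈ (univ.erase (0 : F)).filter (fun a => ¬ IsSquare a), quadraticChar F a
      = -((((univ.erase (0 : F)).filter (fun a => ¬ IsSquare a)).card : ℤ)) := by
    rw [Finset.sum_congr rfl (g := fun _ => (-1 : ℤ)) (fun a ha => ?_), Finset.sum_const,
      nsmul_eq_mul, mul_neg_one]
    simp only [mem_filter, mem_erase, mem_univ, true_and] at ha
    exact quadraticChar_neg_one_iff_not_isSquare.mpr ha.2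
  rw [hs, hn] at h0
  have hsetN : (univ.erase (0 : F)).filter (fun a => ¬ IsSquare a)
      = univ.filter (fun a : F => ¬ IsSquare a) := by
    ext a
    simp only [mem_filter, mem_erase, mem_univ, true_and, and_iff_right_iff_imp]
    exact fun h => ⟨aux_ns_ne_zero h, trivial⟩
  rw [hsetN] at h0
  have hcards : ((univ.erase (0 : F)).filter (fun a => IsSquare a)).card
      + (univ.filter (fun a : F => ¬ IsSquare a)).card = Fintype.card F - 1 := by
    rw [← hsetN, Finset.card_filter_add_card_filter_not,
      Finset.card_erase_of_mem (mem_univ _), Finset.card_univ]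
  have h0' : ((univ.erase (0 : F)).filter (fun a => IsSquare a)).card
      = (univ.filter (fun a : F => ¬ IsSquare a)).card := by omega
  have hq' := Nat.odd_iff.mp hq
  have hcard1 : 1 ≤ Fintype.card F := Fintype.card_pos
  omega

private lemma aux_prod_ns [DecidableEq F] (hq : Odd (Fintype.card F)) (x : F) :
    ∏ a ∈ univ.filter (fun a : F => ¬ IsSquare a), (x - a)
      = x ^ (Fintype.card F / 2) + 1 := by
  have hchar := aux_char hq
  set m := Fintype.card F / 2 with hm
  have hm0 : m ≠ 0 := by
    have h1 : 1 < Fintype.card F := Fintype.one_lt_card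
    have hq' := Nat.odd_iff.mp hq
    omega
  set p : Polynomial F := X ^ m + C 1 with hp
  have hmonic : p.Monic := monic_X_pow_add_C _ hm0
  have hdeg : p.natDegree = m := natDegree_X_pow_add_C
  have hroot : ∀ a : F, ¬ IsSquare a → p.IsRoot a := by
    intro a ha
    have ha0 : a ≠ 0 := aux_ns_ne_zero ha
    have hpow : a ^ m = -1 := by
      rcases FiniteField.pow_dichotomy hchar ha0 with h | h
      · exact absurd ((FiniteField.isSquare_iff hchar ha0).mpr h) ha
      · exact h
    simp [Polynomial.IsRoot, hp, hpow]
  set NS := univ.filter (fun a : F => ¬ IsSquare a) with hNS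
  have hcard : NS.card = m := aux_card_ns hq
  have hle : NS.val ≤ p.roots := by
    rw [Multiset.le_iff_count]
    intro a
    by_cases ha : a ∈ NS
    · have h1 : NS.val.count a = 1 :=
        Multiset.count_eq_one_of_mem NS.nodup (Finset.mem_def.mp ha)
      rw [h1, Polynomial.count_roots]
      have hmem : ¬ IsSquare a := by
        have := ha; rw [hNS, mem_filter] at this; exact this.2
      exact (Polynomial.rootMultiplicity_pos hmonic.ne_zero).mpr (hroot a hmem)
    · have h0 : NS.val.count a = 0 := Multiset.count_eq_zero.mpr ha
      rw [h0]; exact Nat.zero_le _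
  have hcards : Multiset.card p.roots ≤ m := hdeg ▸ p.card_roots'
  have heq : NS.val = p.roots := by
    refine Multiset.eq_of_le_of_card_le hle ?_
    rw [Finset.card_def] at hcard
    omega
  have hprod : (p.roots.map (fun a => X - C a)).prod = p := by
    have hrc : Multiset.card p.roots = p.natDegree := by
      rw [← heq, hdeg, Finset.card_def] at *
      omega
    have := Polynomial.C_leadingCoeff_mul_prod_multiset_X_sub_C (p := p) hrc
    rwa [hmonic.leadingCoeff, map_one, one_mul] at this
  have hev := congrArg (Polynomial.eval x) hprod
  rw [Polynomial.eval_multiset_prod, Multiset.map_map] at hev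
  rw [Finset.prod_eq_multiset_prod, heq]
  have hmc : Multiset.map (fun a : F => x - a) p.roots
      = Multiset.map (Polynomial.eval x ∘ fun a : F => X - C a) p.roots :=
    Multiset.map_congr rfl (fun a _ => by simp)
  rw [hmc, hev, hp]
  simp

private lemma aux_Q [DecidableEq F] (hq : Odd (Fintype.card F)) :
    ∏ c ∈ univ.filter (fun c : F => ¬ IsSquare c ∧ IsSquare (4 - c)), (4 - c) = 1 := by
  have hchar := aux_char hq
  have h2 : (2 : F) ≠ 0 := Ring.two_ne_zero hchar
  set T := univ.filter (fun c : F => ¬ IsSquare c ∧ IsSquare (4 - c)) with hT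
  set A := univ.filter (fun a : F => ¬ IsSquare (a * (4 - a))) with hA
  have hmaps : ∀ a ∈ A, a * (4 - a) ∈ T := by
    intro a ha
    rw [hA, mem_filter] at ha
    rw [hT, mem_filter]
    exact ⟨mem_univ _, ha.2, ⟨2 - a, by ring⟩⟩
  have hi : ∏ v ∈ T, ∏ a ∈ A.filter (fun a => a * (4 - a) = v), a = ∏ a ∈ A, a :=
    Finset.prod_fiberwise_of_maps_to hmaps _
  have hfiber : ∀ v ∈ T, ∏ a ∈ A.filter (fun a => a * (4 - a) = v), a = v := by
    intro v hv
    rw [hT, mem_filter] at hv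
    obtain ⟨-, hns, s, hs⟩ := hv
    have hs0 : s ≠ 0 := by
      rintro rfl
      exact hns (by rw [show v = 2 * 2 from by linear_combination -hs]; exact ⟨2, rfl⟩)
    have hne : (2 : F) + s ≠ 2 - s := by
      intro h
      apply hs0
      have h2s : (2 : F) * s = 0 := by linear_combination h
      rcases mul_eq_zero.mp h2s with h' | h'
      · exact absurd h' h2
      · exact h'
    have hset : A.filter (fun a => a * (4 - a) = v) = {2 + s, 2 - s} := by
      ext a
      rw [mem_filter, hA, mem_filter, mem_insert, mem_singleton]
      constructor
      · rintro ⟨⟨-, -⟩, hav⟩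
        have hz : (a - (2 + s)) * (a - (2 - s)) = 0 := by linear_combination -hav + hs
        rcases mul_eq_zero.mp hz with h' | h'
        · left; linear_combination h'
        · right; linear_combination h'
      · rintro (rfl | rfl)
        · have he : (2 + s) * (4 - (2 + s)) = v := by linear_combination hs
          exact ⟨⟨mem_univ _, by rw [he]; exact hns⟩, he⟩
        · have he : (2 - s) * (4 - (2 - s)) = v := by linear_combination hs
          exact ⟨⟨mem_univ _, by rw [he]; exact hns⟩, he⟩
    rw [hset, Finset.prod_pair hne]
    linear_combination hs
  have hAT : ∏ a ∈ A, a = ∏ v ∈ T, v := by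
    rw [← hi]; exact Finset.prod_congr rfl hfiber
  have hsplit := Finset.prod_filter_mul_prod_filter_not A (fun a => ¬ IsSquare a)
    (fun a => a)
  have hA1 : A.filter (fun a => ¬ IsSquare a) = T := by
    ext a
    rw [mem_filter, hA, mem_filter, hT, mem_filter]
    constructor
    · rintro ⟨⟨-, hab⟩, hna⟩
      obtain ⟨-, -, hiff⟩ := aux_mul_not_sq hab
      exact ⟨mem_univ _, hna, hiff.mp hna⟩
    · rintro ⟨-, hna, hsb⟩
      have hb0 : (4 : F) - a ≠ 0 := by
        intro h
        exact hna (by rw [show a = 2 * 2 from by linear_combination -h]; exact ⟨2, rfl⟩)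
      exact ⟨⟨mem_univ _, aux_mul_ns_sq hna hsb hb0⟩, hna⟩
  have hA2 : ∏ a ∈ A.filter (fun a => ¬¬ IsSquare a), a = ∏ c ∈ T, (4 - c) := by
    refine (Finset.prod_nbij' (fun c : F => 4 - c) (fun a : F => 4 - a) ?_ ?_ ?_ ?_ ?_).symm
    · intro c hc
      rw [hT, mem_filter] at hc
      obtain ⟨-, hns, hsq⟩ := hc
      have hc0 : (4 : F) - c ≠ 0 := by
        intro h
        exact hns (by rw [show c = 2 * 2 from by linear_combination -h]; exact ⟨2, rfl⟩)
      rw [mem_filter, hA, mem_filter]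
      refine ⟨⟨mem_univ _, ?_⟩, not_not.mpr hsq⟩
      rw [show (4 : F) - (4 - c) = c from by ring, mul_comm]
      exact aux_mul_ns_sq hns hsq hc0
    · intro a ha
      rw [mem_filter, hA, mem_filter] at ha
      obtain ⟨⟨-, hab⟩, hsa⟩ := ha
      rw [not_not] at hsa
      obtain ⟨-, -, hiff⟩ := aux_mul_not_sq hab
      rw [hT, mem_filter]
      refine ⟨mem_univ _, fun h => (hiff.mpr h) hsa, ?_⟩
      rw [show (4 : F) - (4 - a) = a from by ring]
      exact hsa
    · intro c _; ring
    · intro a _; ring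
    · intro c _; rfl
  rw [hA1, hA2, hAT] at hsplit
  have hT0 : ∏ v ∈ T, v ≠ 0 := by
    rw [Finset.prod_ne_zero_iff]
    intro v hv
    rw [hT, mem_filter] at hv
    exact aux_ns_ne_zero hv.2.1
  exact mul_left_cancel₀ hT0 (by rw [mul_one]; exact hsplit)

end Aux

/-- The product of all `a ∈ F_q` such that both `a` and `4 - a` are
nonsquares in `F_q` equals `2`. -/
theorem prod_nonsquares_eq_two {F : Type*} [Field F] [Fintype F]
    (hq : Odd (Fintype.card F)) :
    ∏ a ∈ Finset.univ.filter (fun a : F => ¬ IsSquare a ∧ ¬ IsSquare (4 - a)), a = 2 := by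
  classical
  have hchar := aux_char hq
  have h2 : (2 : F) ≠ 0 := Ring.two_ne_zero hchar
  have hNS : ∏ a ∈ univ.filter (fun a : F => ¬ IsSquare a), ((4 : F) - a) = 2 := by
    rw [aux_prod_ns hq 4]
    have h4 : (4 : F) ^ (Fintype.card F / 2) = 1 := by
      have h44 : (4 : F) = 2 ^ 2 := by norm_num
      rw [h44, ← pow_mul, Nat.two_mul_odd_div_two (Nat.odd_iff.mp hq)]
      exact FiniteField.pow_card_sub_one_eq_one 2 h2
    rw [h4]; norm_num
  rw [← Finset.prod_filter_mul_prod_filter_not (univ.filter (fun a : F => ¬ IsSquare a))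
    (fun a => IsSquare (4 - a)) (fun a => (4 : F) - a)] at hNS
  rw [Finset.filter_filter, Finset.filter_filter] at hNS
  rw [aux_Q hq, one_mul] at hNS
  rw [← hNS]
  refine Finset.prod_nbij' (fun a : F => 4 - a) (fun a : F => 4 - a) ?_ ?_ ?_ ?_ ?_
  · intro a ha
    rw [mem_filter] at ha ⊢
    obtain ⟨-, h1, h3⟩ := ha
    rw [show (4 : F) - (4 - a) = a from by ring]
    exact ⟨mem_univ _, h3, h1⟩
  · intro a ha
    rw [mem_filter] at ha ⊢
    obtain ⟨-, h1, h3⟩ := ha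
    rw [show (4 : F) - (4 - a) = a from by ring]
    exact ⟨mem_univ _, h3, h1⟩
  · intro a _; ring
  · intro a _; ring
  · intro a _; ring
end

section
/- The product of all nonzero a ∈ F_q such that both 1 - a and a + 3 are nonsquares in F_q equals 2 if q ≡ 1 or q ≡ -1 (mod 12), and equals -1 otherwise. -/
open scoped Classical
open Polynomial

namespace ProdNS



lemma C_two' {R : Type*} [CommRing R] : ((2 : R[X])) = C (2 : R) :=
  (map_ofNat (C : R →+* R[X]) 2).symm

lemma dickson_monic_natDegree {R : Type*} [CommRing R] [Nontrivial R] (a : R) :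
    ∀ j : ℕ, (dickson 1 a (j + 1)).Monic ∧ (dickson 1 a (j + 1)).natDegree = j + 1 := by
  intro j
  induction j using Nat.strong_induction_on with
  | _ j ih =>
    match j with
    | 0 => exact ⟨monic_X, natDegree_X⟩
    | 1 =>
      have hq : dickson 1 a 2 = X ^ 2 - C (a * 2) := by
        rw [dickson_two]
        push_cast
        rw [C_mul, ← C_two']
        ring
      have hlt : degree (C (a * 2)) < degree ((X : R[X]) ^ 2) := by
        calc degree (C (a * 2)) ≤ 0 := degree_C_le
        _ < degree ((X : R[X]) ^ 2) := by rw [degree_X_pow]; norm_num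
      constructor
      · rw [hq]; exact (monic_X_pow 2).sub_of_left hlt
      · rw [hq]
        have h' := degree_sub_eq_left_of_degree_lt hlt
        rw [degree_X_pow] at h'
        exact natDegree_eq_of_degree_eq_some h'
    | (j + 2) =>
      obtain ⟨m2, d2⟩ := ih (j + 1) (by omega)
      obtain ⟨m1, d1⟩ := ih j (by omega)
      have hrec : dickson 1 a (j + 3) = X * dickson 1 a (j + 2) - C a * dickson 1 a (j + 1) :=
        dickson_add_two 1 a (j + 1)
      have hP : (X * dickson 1 a (j + 2)).Monic := monic_X.mul m2
      have hPdeg : (X * dickson 1 a (j + 2)).natDegree = j + 3 := by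
        rw [monic_X.natDegree_mul m2, natDegree_X, d2]
        omega
      have hlt : degree (C a * dickson 1 a (j + 1)) < degree (X * dickson 1 a (j + 2)) := by
        apply lt_of_le_of_lt (degree_mul_le _ _)
        have h1 : degree (dickson 1 a (j + 1)) ≤ ((j + 1 : ℕ) : WithBot ℕ) :=
          le_trans degree_le_natDegree (by rw [d1])
        calc degree (C a) + degree (dickson 1 a (j + 1)) ≤ 0 + ((j + 1 : ℕ) : WithBot ℕ) :=
              add_le_add degree_C_le h1
          _ = ((j + 1 : ℕ) : WithBot ℕ) := by rw [zero_add]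
          _ < ((j + 3 : ℕ) : WithBot ℕ) := by exact_mod_cast (by omega : j + 1 < j + 3)
          _ = degree (X * dickson 1 a (j + 2)) := by
              rw [degree_eq_natDegree hP.ne_zero, hPdeg]
      constructor
      · rw [hrec]; exact hP.sub_of_left hlt
      · rw [hrec]
        have h' := degree_sub_eq_left_of_degree_lt hlt
        rw [degree_eq_natDegree hP.ne_zero, hPdeg] at h'
        exact natDegree_eq_of_degree_eq_some h'

lemma dickson_eval_neg_one {R : Type*} [CommRing R] :
    ∀ j : ℕ, (dickson 1 (1 : R) j).eval (-1) = if j % 3 = 0 then 2 else -1 := by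
  intro j
  induction j using Nat.strong_induction_on with
  | _ j ih =>
    match j with
    | 0 => simp [dickson_zero]; norm_num
    | 1 => simp [dickson_one]
    | (j + 2) =>
      have h1 := ih (j + 1) (by omega)
      have h0 := ih j (by omega)
      have hrec : dickson 1 (1:R) (j + 2) = X * dickson 1 1 (j + 1) - C 1 * dickson 1 1 j :=
        dickson_add_two 1 1 j
      rw [hrec]
      simp only [eval_sub, eval_mul, eval_X, eval_C, one_mul, h1, h0]
      rcases (by omega : j % 3 = 0 ∨ j % 3 = 1 ∨ j % 3 = 2) with h | h | h
      · rw [h, (by omega : (j + 1) % 3 = 1), (by omega : (j + 2) % 3 = 2)]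
        norm_num
      · rw [h, (by omega : (j + 1) % 3 = 2), (by omega : (j + 2) % 3 = 0)]
        norm_num
      · rw [h, (by omega : (j + 1) % 3 = 0), (by omega : (j + 2) % 3 = 1)]
        norm_num




variable {F : Type*} [Field F] [Fintype F]

local notation "K" => AlgebraicClosure F
local notation "qq" => Fintype.card F
local notation "emb" => algebraMap F (AlgebraicClosure F)

lemma frob_add (x y : K) : (x + y) ^ qq = x ^ qq + y ^ qq := by
  haveI : CharP F (ringChar F) := ringChar.charP F
  have hp : (ringChar F).Prime := CharP.char_is_prime F (ringChar F)
  haveI : Fact (ringChar F).Prime := ⟨hp⟩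
  haveI : CharP (AlgebraicClosure F) (ringChar F) :=
    charP_of_injective_algebraMap (algebraMap F (AlgebraicClosure F)).injective (ringChar F)
  obtain ⟨f, _, hqf⟩ := FiniteField.card F (ringChar F)
  rw [hqf]
  exact add_pow_char_pow x y (ringChar F) f

lemma frob_sub (x y : K) : (x - y) ^ qq = x ^ qq - y ^ qq := by
  haveI : CharP F (ringChar F) := ringChar.charP F
  have hp : (ringChar F).Prime := CharP.char_is_prime F (ringChar F)
  haveI : Fact (ringChar F).Prime := ⟨hp⟩
  haveI : CharP (AlgebraicClosure F) (ringChar F) :=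
    charP_of_injective_algebraMap (algebraMap F (AlgebraicClosure F)).injective (ringChar F)
  obtain ⟨f, _, hqf⟩ := FiniteField.card F (ringChar F)
  rw [hqf]
  exact sub_pow_char_pow x y f

lemma emb_pow_card (y : F) : (emb y) ^ qq = emb y := by
  rw [← map_pow, FiniteField.pow_card]

/-- Fixed points of the `q`-power map in the algebraic closure come from `F`. -/
lemma fixed_mem_range {x : K} (hx : x ^ qq = x) : ∃ y : F, emb y = x := by
  classical
  have h2 : (2:ℕ) ≤ qq := Fintype.one_lt_card
  set P : Polynomial K := X ^ qq - X with hP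
  have hdegX : degree (X : K[X]) < degree ((X : K[X]) ^ qq) := by
    rw [degree_X_pow, degree_X]
    exact_mod_cast h2
  have hPmonic : P.Monic := (monic_X_pow qq).sub_of_left hdegX
  have hPdeg : P.natDegree = qq := by
    have h' := degree_sub_eq_left_of_degree_lt hdegX
    rw [degree_X_pow] at h'
    exact natDegree_eq_of_degree_eq_some h'
  have hPne : P ≠ 0 := hPmonic.ne_zero
  have himg : (Finset.univ.image (fun y : F => emb y)) ⊆ P.roots.toFinset := by
    intro z hz
    obtain ⟨y, _, rfl⟩ := Finset.mem_image.mp hz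
    rw [Multiset.mem_toFinset, mem_roots hPne]
    simp only [IsRoot.def, hP, eval_sub, eval_pow, eval_X]
    rw [emb_pow_card, sub_self]
  have hcard : P.roots.toFinset.card ≤ (Finset.univ.image (fun y : F => emb y)).card := by
    rw [Finset.card_image_of_injective _ (algebraMap F (AlgebraicClosure F)).injective,
      Finset.card_univ]
    calc P.roots.toFinset.card ≤ Multiset.card P.roots := Multiset.toFinset_card_le _
      _ ≤ P.natDegree := P.card_roots'
      _ = qq := hPdeg
  have heq := Finset.eq_of_subset_of_card_le himg hcard
  have hxmem : x ∈ P.roots.toFinset := by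
    rw [Multiset.mem_toFinset, mem_roots hPne]
    simp only [IsRoot.def, hP, eval_sub, eval_pow, eval_X, hx, sub_self]
  rw [← heq] at hxmem
  obtain ⟨y, _, hy⟩ := Finset.mem_image.mp hxmem
  exact ⟨y, hy⟩

/-- Transfer of squareness: for `u : F` and a square root `r` of `u` in the closure,
`u` is a square in `F` iff `r` is fixed by Frobenius. -/
lemma isSquare_iff_frob_fixed (hodd : Odd qq) (u : F) (r : K) (hr : r ^ 2 = emb u) :
    IsSquare u ↔ r ^ qq = r := by
  constructor
  · rintro ⟨b, rfl⟩
    have hb : r ^ 2 = (emb b) ^ 2 := by rw [hr, map_mul]; ring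
    have hfac : (r - emb b) * (r + emb b) = 0 := by linear_combination hb
    rcases mul_eq_zero.mp hfac with h | h
    · rw [sub_eq_zero.mp h, emb_pow_card]
    · have hre : r = - emb b := eq_neg_of_add_eq_zero_left h
      rw [hre, hodd.neg_pow, emb_pow_card]
  · intro hfix
    obtain ⟨y, hy⟩ := fixed_mem_range hfix
    have hyy : emb (y * y) = emb u := by rw [map_mul, hy, ← pow_two, hr]
    exact ⟨y, ((algebraMap F (AlgebraicClosure F)).injective hyy).symm⟩




variable {L : Type*} [Field L] [IsAlgClosed L]

lemma torus_mem (n : ℕ) (hn0 : n ≠ 0) {σ : L} :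
    σ ∈ ((X : L[X]) ^ n - C (-1)).roots.toFinset ↔ σ ^ n = -1 := by
  have hTne : ((X : L[X]) ^ n - C (-1)) ≠ 0 := (monic_X_pow_sub_C _ hn0).ne_zero
  rw [Multiset.mem_toFinset, mem_roots hTne]
  simp only [IsRoot.def, eval_sub, eval_pow, eval_X, eval_C, sub_neg_eq_add]
  exact add_eq_zero_iff_eq_neg

lemma torus_card (n : ℕ) (hn0 : n ≠ 0) (hnL : (n : L) ≠ 0) :
    ((X : L[X]) ^ n - C (-1)).roots.toFinset.card = n := by
  have hsep : ((X : L[X]) ^ n - C (-1)).Separable :=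
    separable_X_pow_sub_C (-1) hnL (neg_ne_zero.mpr one_ne_zero)
  rw [Multiset.toFinset_card_of_nodup (nodup_roots hsep),
    (splits_iff_card_roots).mp (IsAlgClosed.splits _), natDegree_X_pow_sub_C]

lemma torus_prod (n : ℕ) (hn0 : n ≠ 0) (hnL : (n : L) ≠ 0) (π : L) :
    ∏ σ ∈ ((X : L[X]) ^ n - C (-1)).roots.toFinset, (π - σ) = π ^ n + 1 := by
  have hsep : ((X : L[X]) ^ n - C (-1)).Separable :=
    separable_X_pow_sub_C (-1) hnL (neg_ne_zero.mpr one_ne_zero)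
  have hmon : ((X : L[X]) ^ n - C (-1)).Monic := monic_X_pow_sub_C _ hn0
  have hfact := (IsAlgClosed.splits _).eq_prod_roots_of_monic hmon
  have heval : eval π ((X : L[X]) ^ n - C (-1)) = π ^ n + 1 := by
    simp [eval_sub, eval_pow, eval_X, eval_C, sub_neg_eq_add]
  conv_rhs => rw [← heval]
  conv_rhs => rw [hfact]
  rw [eval_multiset_prod, Multiset.map_map]
  have hval : ((X : L[X]) ^ n - C (-1)).roots.toFinset.val
      = ((X : L[X]) ^ n - C (-1)).roots := by
    rw [Multiset.toFinset_val, Multiset.dedup_eq_self.mpr (nodup_roots hsep)]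
  rw [Finset.prod_eq_multiset_prod, hval]
  congr 1
  apply Multiset.map_congr rfl
  intro a _
  simp [eval_sub, eval_X, eval_C]


section Aux

variable {F : Type*} [Field F] [Fintype F]

local notation "K" => AlgebraicClosure F
local notation "emb" => algebraMap F (AlgebraicClosure F)

theorem aux (n k : ℕ) (e : ℤ)
    (hnk : n = 2 * k) (hk : 1 ≤ k) (he : e = 1 ∨ e = -1)
    (hcard : (Fintype.card F : ℤ) = 2 * n + e)
    (hsq : IsSquare (-1 : F) ↔ e = 1) (hq2 : ringChar F ≠ 2) :
    ∏ a ∈ Finset.univ.filter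
        (fun a : F => a ≠ 0 ∧ ¬ IsSquare (1 - a) ∧ ¬ IsSquare (a + 3)), a =
      if k % 3 = 0 then 2 else -1 := by
  classical
  have hn0 : n ≠ 0 := by omega
  have hqodd : Odd (Fintype.card F) := by
    rcases he with rfl | rfl
    · exact ⟨n, by omega⟩
    · exact ⟨n - 1, by omega⟩
  have hnq : n < Fintype.card F := by rcases he with rfl | rfl <;> omega
  -- characteristic facts
  haveI : CharP F (ringChar F) := ringChar.charP F
  have hp : (ringChar F).Prime := CharP.char_is_prime F (ringChar F)
  have h2F : (2 : F) ≠ 0 := by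
    intro h
    have hdvd : ringChar F ∣ 2 := (CharP.cast_eq_zero_iff F (ringChar F) 2).mp h
    exact hq2 ((Nat.prime_dvd_prime_iff_eq hp Nat.prime_two).mp hdvd)
  have hembinj : Function.Injective (emb) := (algebraMap F (AlgebraicClosure F)).injective
  have h2K : (2 : K) ≠ 0 := by
    intro h
    apply h2F
    apply hembinj
    rw [map_ofNat, map_zero, h]
  have hm1K : (-1 : K) ≠ 1 := by
    intro h; apply h2K; linear_combination -h
  have hnK : ((n : K)) ≠ 0 := by
    intro h
    haveI : CharP (AlgebraicClosure F) (ringChar F) :=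
      charP_of_injective_algebraMap (algebraMap F (AlgebraicClosure F)).injective (ringChar F)
    have hdvd : ringChar F ∣ n := (CharP.cast_eq_zero_iff (AlgebraicClosure F) (ringChar F) n).mp h
    obtain ⟨f, _, hqf⟩ := FiniteField.card F (ringChar F)
    have hpq : ringChar F ∣ Fintype.card F := by
      rw [hqf]; exact dvd_pow_self _ (by positivity)
    have h1 : (ringChar F : ℤ) ∣ e := by
      have d1 : (ringChar F : ℤ) ∣ (Fintype.card F : ℤ) := Int.natCast_dvd_natCast.mpr hpq
      have d2 : (ringChar F : ℤ) ∣ (2 * n : ℤ) := Dvd.dvd.mul_left (Int.natCast_dvd_natCast.mpr hdvd) 2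
      have : (e : ℤ) = (Fintype.card F : ℤ) - 2 * n := by rw [hcard]; ring
      rw [this]; exact dvd_sub d1 d2
    have h2 : (ringChar F : ℤ) ∣ 1 := by
      rcases he with rfl | rfl
      · exact h1
      · exact dvd_neg.mp h1
    have := Int.le_of_dvd one_pos h2
    have := hp.two_le
    omega
  -- the torus
  set S : Finset (AlgebraicClosure F) :=
    ((X : (AlgebraicClosure F)[X]) ^ n - C (-1)).roots.toFinset with hSdef
  have hSmem : ∀ σ : K, σ ∈ S ↔ σ ^ n = -1 := fun σ => torus_mem n hn0
  have hScard : S.card = n := torus_card n hn0 hnK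
  have hSprod : ∀ π : K, ∏ σ ∈ S, (π - σ) = π ^ n + 1 := torus_prod n hn0 hnK
  have hSne0 : ∀ σ ∈ S, σ ≠ 0 := by
    intro σ hσ h0
    have := (hSmem σ).mp hσ
    rw [h0, zero_pow hn0] at this
    exact (neg_ne_zero.mpr one_ne_zero) this.symm
  have hSne1 : ∀ σ ∈ S, σ ≠ 1 := by
    intro σ hσ h1
    have := (hSmem σ).mp hσ
    rw [h1, one_pow] at this
    exact hm1K this.symm
  have hSnem1 : ∀ σ ∈ S, σ ≠ -1 := by
    intro σ hσ h1
    have := (hSmem σ).mp hσ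
    rw [h1, hnk, pow_mul, neg_one_sq, one_pow] at this
    exact hm1K this.symm
  have hSinv : ∀ σ ∈ S, σ⁻¹ ∈ S := by
    intro σ hσ
    rw [hSmem] at hσ ⊢
    rw [inv_pow, hσ]
    norm_num
  have hSprodid : ∏ σ ∈ S, σ = 1 := by
    have h1 := hSprod 0
    rw [zero_pow hn0, zero_add] at h1
    have h2 : ∏ σ ∈ S, ((0:K) - σ) = (-1) ^ S.card * ∏ σ ∈ S, σ := by
      rw [← Finset.prod_const, ← Finset.prod_mul_distrib]
      apply Finset.prod_congr rfl
      intro σ _; ring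
    rw [h2, hScard, hnk, pow_mul, neg_one_sq, one_pow, one_mul] at h1
    exact h1
  -- power auxiliary
  have hpowq : ∀ δ : K, δ ≠ 0 →
      δ ^ Fintype.card F = δ ^ (2 * n) * (if e = 1 then δ else δ⁻¹) := by
    intro δ hδ
    rcases he with rfl | rfl
    · rw [if_pos rfl]
      have hq1 : Fintype.card F = 2 * n + 1 := by omega
      rw [hq1, pow_succ]
    · rw [if_neg (by norm_num)]
      have hq1 : Fintype.card F + 1 = 2 * n := by omega
      have hmul : δ ^ Fintype.card F * δ = δ ^ (2 * n) := by rw [← pow_succ, hq1]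
      field_simp
      linear_combination hmul
  -- the imaginary unit
  obtain ⟨ι, hι⟩ : ∃ ι : K, ι ^ 2 = -1 :=
    IsAlgClosed.exists_pow_nat_eq (-1 : K) (n := 2) (by norm_num)
  have hι0 : ι ≠ 0 := by
    intro h; rw [h] at hι; simp at hι
  have hιq : ι ^ Fintype.card F = if e = 1 then ι else -ι := by
    have hisq : IsSquare (-1 : F) ↔ ι ^ Fintype.card F = ι :=
      isSquare_iff_frob_fixed hqodd (-1) ι (by rw [hι, map_neg, map_one])
    have hpm : ι ^ Fintype.card F = ι ∨ ι ^ Fintype.card F = -ι := by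
      have h2 : (ι ^ Fintype.card F) ^ 2 = ι ^ 2 := by
        rw [← pow_mul, mul_comm, pow_mul, hι]
        exact Odd.neg_one_pow hqodd
      have hfac : (ι ^ Fintype.card F - ι) * (ι ^ Fintype.card F + ι) = 0 := by
        linear_combination h2
      rcases mul_eq_zero.mp hfac with h | h
      · exact Or.inl (sub_eq_zero.mp h)
      · exact Or.inr (eq_neg_of_add_eq_zero_left h)
    rcases he with rfl | rfl
    · rw [if_pos rfl]; exact hisq.mp (hsq.mpr rfl)
    · rw [if_neg (by norm_num)]
      have hns : ¬ IsSquare (-1 : F) := fun h => by simpa using hsq.mp h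
      rcases hpm with h | h
      · exact absurd (hisq.mpr h) hns
      · exact h
  -- the key characterization
  have key : ∀ δ : K, δ ≠ 0 →
      (δ ^ (2 * n) = -1 ↔
        ((δ + δ⁻¹) ^ Fintype.card F = -(δ + δ⁻¹) ∧
          (ι * (δ - δ⁻¹)) ^ Fintype.card F = -(ι * (δ - δ⁻¹)))) := by
    intro δ hδ
    have hr : (δ + δ⁻¹) ^ Fintype.card F
        = δ ^ Fintype.card F + (δ ^ Fintype.card F)⁻¹ := by
      rw [frob_add, inv_pow]
    have hs : (ι * (δ - δ⁻¹)) ^ Fintype.card F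
        = ι ^ Fintype.card F * (δ ^ Fintype.card F - (δ ^ Fintype.card F)⁻¹) := by
      rw [mul_pow, frob_sub, inv_pow]
    have hδq := hpowq δ hδ
    constructor
    · intro h2n
      rw [h2n] at hδq
      rcases he with rfl | rfl
      · rw [if_pos rfl] at hδq
        rw [if_pos rfl] at hιq
        have hδq' : δ ^ Fintype.card F = -δ := by rw [hδq]; ring
        constructor
        · rw [hr, hδq', inv_neg]; ring
        · rw [hs, hδq', hιq, inv_neg]; ring
      · rw [if_neg (by norm_num)] at hδq
        rw [if_neg (by norm_num)] at hιq
        have hδq' : δ ^ Fintype.card F = -δ⁻¹ := by rw [hδq]; ring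
        constructor
        · rw [hr, hδq', inv_neg, inv_inv]; ring
        · rw [hs, hδq', hιq, inv_neg, inv_inv]; ring
    · rintro ⟨h1', h2'⟩
      rw [hr] at h1'
      rw [hs] at h2'
      rcases he with rfl | rfl
      · rw [if_pos rfl] at hδq
        rw [if_pos rfl] at hιq
        rw [hιq] at h2'
        have h2'' : δ ^ Fintype.card F - (δ ^ Fintype.card F)⁻¹ = -(δ - δ⁻¹) :=
          mul_left_cancel₀ hι0 (by linear_combination h2')
        have hsum : 2 * (δ ^ Fintype.card F) = 2 * (-δ) := by
          linear_combination h1' + h2''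
        have hw : δ ^ Fintype.card F = -δ := mul_left_cancel₀ h2K hsum
        rw [hδq] at hw
        have hw' : δ ^ (2 * n) * δ = (-1) * δ := by rw [hw]; ring
        exact mul_right_cancel₀ hδ hw'
      · rw [if_neg (by norm_num)] at hδq
        rw [if_neg (by norm_num)] at hιq
        rw [hιq] at h2'
        have h2'' : δ ^ Fintype.card F - (δ ^ Fintype.card F)⁻¹ = δ - δ⁻¹ :=
          mul_left_cancel₀ (neg_ne_zero.mpr hι0) (by linear_combination h2')
        have hsum : 2 * (δ ^ Fintype.card F) = 2 * (-δ⁻¹) := by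
          linear_combination h1' + h2''
        have hw : δ ^ Fintype.card F = -δ⁻¹ := mul_left_cancel₀ h2K hsum
        rw [hδq] at hw
        have hw' : δ ^ (2 * n) * δ⁻¹ = (-1) * δ⁻¹ := by rw [hw]; ring
        exact mul_right_cancel₀ (inv_ne_zero hδ) hw'
  -- square-root dichotomy
  have hdich : ∀ (w : F) (r : K), r ^ 2 = emb w → ¬ IsSquare w →
      r ^ Fintype.card F = -r := by
    intro w r hrw hw
    have h2 : (r ^ Fintype.card F) ^ 2 = r ^ 2 := by
      rw [← pow_mul, mul_comm, pow_mul, hrw, ← map_pow, FiniteField.pow_card]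
    have hfac : (r ^ Fintype.card F - r) * (r ^ Fintype.card F + r) = 0 := by
      linear_combination h2
    rcases mul_eq_zero.mp hfac with h | h
    · exact absurd ((isSquare_iff_frob_fixed hqodd w r hrw).mpr (sub_eq_zero.mp h)) hw
    · exact eq_neg_of_add_eq_zero_left h
  have hsqrt2 : ∀ σ : K, ∃ δ : K, δ ^ 2 = σ := fun σ =>
    IsAlgClosed.exists_pow_nat_eq σ (n := 2) (by norm_num)
  set A : Finset F := Finset.univ.filter (fun u : F => ¬ IsSquare u ∧ ¬ IsSquare (4 - u))
    with hAdef
  -- image identification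
  have himg : S.image (fun σ : K => σ + 2 + σ⁻¹) = A.image (fun u => emb u) := by
    apply Finset.Subset.antisymm
    · intro v hv
      obtain ⟨σ, hσS, rfl⟩ := Finset.mem_image.mp hv
      have hσn := (hSmem σ).mp hσS
      have hσ0 := hSne0 σ hσS
      have hσ2n : σ ^ (2 * n) = 1 := by
        rw [mul_comm, pow_mul, hσn]; norm_num
      have hσq : σ ^ Fintype.card F = σ ∨ σ ^ Fintype.card F = σ⁻¹ := by
        have h := hpowq σ hσ0
        rw [hσ2n, one_mul] at h
        rcases he with rfl | rfl
        · rw [if_pos rfl] at h; exact Or.inl h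
        · rw [if_neg (by norm_num)] at h; exact Or.inr h
      have h2q : (2 : K) ^ Fintype.card F = 2 := by
        calc (2:K) ^ Fintype.card F = (emb 2) ^ Fintype.card F := by rw [map_ofNat]
          _ = emb ((2:F) ^ Fintype.card F) := by rw [map_pow]
          _ = emb 2 := by rw [FiniteField.pow_card]
          _ = 2 := by rw [map_ofNat]
      have hfix : (σ + 2 + σ⁻¹) ^ Fintype.card F = σ + 2 + σ⁻¹ := by
        rw [frob_add, frob_add, h2q, inv_pow]
        rcases hσq with h | h
        · rw [h]
        · rw [h, inv_inv]; ring
      obtain ⟨u, hu⟩ := fixed_mem_range hfix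
      obtain ⟨δ, hδ2⟩ := hsqrt2 σ
      have hδ0 : δ ≠ 0 := by
        intro h; rw [h] at hδ2; exact hσ0 (by rw [← hδ2]; norm_num)
      have hδ2n : δ ^ (2 * n) = -1 := by rw [pow_mul, hδ2]; exact hσn
      obtain ⟨hreq, hseq⟩ := (key δ hδ0).mp hδ2n
      have hrval : (δ + δ⁻¹) ^ 2 = emb u := by
        rw [hu, ← hδ2]; field_simp; ring
      have hrne : δ + δ⁻¹ ≠ 0 := by
        intro h0
        apply hSnem1 σ hσS
        have hinv : δ⁻¹ = -δ := by linear_combination h0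
        have h1 := mul_inv_cancel₀ hδ0
        rw [hinv] at h1
        rw [← hδ2]
        linear_combination -h1
      have hnsq_u : ¬ IsSquare u := by
        intro hIs
        have hthis := (isSquare_iff_frob_fixed hqodd u (δ + δ⁻¹) hrval).mp hIs
        rw [hreq] at hthis
        exact hrne (by apply mul_left_cancel₀ h2K; linear_combination -hthis)
      have hsval : (ι * (δ - δ⁻¹)) ^ 2 = emb (4 - u) := by
        rw [map_sub, hu, map_ofNat, ← hδ2, mul_pow, hι]
        field_simp
        ring
      have hsne : ι * (δ - δ⁻¹) ≠ 0 := by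
        intro h0
        rcases mul_eq_zero.mp h0 with h | h
        · exact hι0 h
        · apply hSne1 σ hσS
          have hinv : δ⁻¹ = δ := by linear_combination -h
          have h1 := mul_inv_cancel₀ hδ0
          rw [hinv] at h1
          rw [← hδ2, ← h1]; ring
      have hnsq_4u : ¬ IsSquare (4 - u) := by
        intro hIs
        have hthis := (isSquare_iff_frob_fixed hqodd (4-u) (ι * (δ - δ⁻¹)) hsval).mp hIs
        rw [hseq] at hthis
        exact hsne (by apply mul_left_cancel₀ h2K; linear_combination -hthis)
      exact Finset.mem_image.mpr
        ⟨u, Finset.mem_filter.mpr ⟨Finset.mem_univ _, hnsq_u, hnsq_4u⟩, hu⟩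
    · intro v hv
      obtain ⟨u, huA, rfl⟩ := Finset.mem_image.mp hv
      obtain ⟨-, hu1, hu2⟩ := Finset.mem_filter.mp huA
      have hPdeg : (C (1:K) * X ^ 2 + C (-(emb u - 2)) * X + C 1).degree ≠ 0 := by
        rw [Polynomial.degree_quadratic one_ne_zero]; norm_num
      obtain ⟨σ, hσroot⟩ := IsAlgClosed.exists_root _ hPdeg
      have hroot : σ ^ 2 - (emb u - 2) * σ + 1 = 0 := by
        simp only [IsRoot.def, eval_add, eval_mul, eval_pow, eval_C, eval_X] at hσroot
        linear_combination hσroot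
      have hσ0 : σ ≠ 0 := by
        intro h; rw [h] at hroot; simp at hroot
      have hφσ : σ + 2 + σ⁻¹ = emb u := by
        field_simp
        linear_combination hroot
      obtain ⟨δ, hδ2⟩ := hsqrt2 σ
      have hδ0 : δ ≠ 0 := by
        intro h; rw [h] at hδ2; exact hσ0 (by rw [← hδ2]; norm_num)
      have hrval : (δ + δ⁻¹) ^ 2 = emb u := by
        rw [← hφσ, ← hδ2]; field_simp; ring
      have hsval : (ι * (δ - δ⁻¹)) ^ 2 = emb (4 - u) := by
        rw [map_sub, ← hφσ, map_ofNat, ← hδ2, mul_pow, hι]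
        field_simp
        ring
      have hrq := hdich u (δ + δ⁻¹) hrval hu1
      have hsq' := hdich (4 - u) (ι * (δ - δ⁻¹)) hsval hu2
      have hδ2n : δ ^ (2 * n) = -1 := (key δ hδ0).mpr ⟨hrq, hsq'⟩
      have hσS : σ ∈ S := (hSmem σ).mpr (by rw [← hδ2, ← pow_mul]; exact hδ2n)
      exact Finset.mem_image.mpr ⟨σ, hσS, hφσ⟩
  -- fibers have exactly two elements
  have hfib : ∀ σ₀ ∈ S, S.filter (fun σ : K => σ + 2 + σ⁻¹ = σ₀ + 2 + σ₀⁻¹)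
      = {σ₀, σ₀⁻¹} := by
    intro σ₀ hσ₀
    have hσ₀0 := hSne0 σ₀ hσ₀
    ext σ
    simp only [Finset.mem_filter, Finset.mem_insert, Finset.mem_singleton]
    constructor
    · rintro ⟨hσS, hφeq⟩
      have hσ0 := hSne0 σ hσS
      have hfac : (σ - σ₀) * (σ - σ₀⁻¹) = 0 := by
        linear_combination σ * hφeq + mul_inv_cancel₀ hσ₀0 - mul_inv_cancel₀ hσ0
      rcases mul_eq_zero.mp hfac with h | h
      · exact Or.inl (sub_eq_zero.mp h)
      · exact Or.inr (sub_eq_zero.mp h)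
    · rintro (rfl | rfl)
      · exact ⟨hσ₀, rfl⟩
      · refine ⟨hSinv σ₀ hσ₀, ?_⟩
        rw [inv_inv]; ring
  have hfibcard : ∀ v ∈ S.image (fun σ : K => σ + 2 + σ⁻¹),
      (S.filter (fun σ : K => σ + 2 + σ⁻¹ = v)).card = 2 := by
    intro v hv
    obtain ⟨σ₀, hσ₀S, rfl⟩ := Finset.mem_image.mp hv
    have hne : σ₀ ≠ σ₀⁻¹ := by
      intro h
      have h1 : σ₀ * σ₀ = 1 := by
        nth_rewrite 2 [h]
        exact mul_inv_cancel₀ (hSne0 σ₀ hσ₀S)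
      rcases mul_self_eq_one_iff.mp h1 with h' | h'
      · exact hSne1 σ₀ hσ₀S h'
      · exact hSnem1 σ₀ hσ₀S h'
    rw [hfib σ₀ hσ₀S, Finset.card_pair hne]
  -- cardinality of A
  have himgcard : (S.image (fun σ : K => σ + 2 + σ⁻¹)).card = A.card := by
    rw [himg, Finset.card_image_of_injective _ hembinj]
  have hAcard : A.card = k := by
    have hsum := Finset.card_eq_sum_card_fiberwise
      (f := fun σ : K => σ + 2 + σ⁻¹) (s := S) (t := S.image (fun σ : K => σ + 2 + σ⁻¹))
      (fun x hx => Finset.mem_image_of_mem _ hx)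
    rw [Finset.sum_congr rfl (fun v hv => hfibcard v hv), Finset.sum_const, smul_eq_mul,
      hScard, himgcard] at hsum
    omega

  -- pointwise product identity
  have hpoint : ∀ x : F,
      (∏ u ∈ A, (x - u)) ^ 2 = (dickson 1 (1 : F) n).eval (x - 2) + 2 := by
    intro x
    have hPdeg : (C (1:K) * X ^ 2 + C (-(emb x - 2)) * X + C 1).degree ≠ 0 := by
      rw [Polynomial.degree_quadratic one_ne_zero]; norm_num
    obtain ⟨π, hπroot⟩ := IsAlgClosed.exists_root _ hPdeg
    have hroot : π ^ 2 - (emb x - 2) * π + 1 = 0 := by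
      simp only [IsRoot.def, eval_add, eval_mul, eval_pow, eval_C, eval_X] at hπroot
      linear_combination hπroot
    have hπ0 : π ≠ 0 := by
      intro h; rw [h] at hroot; simp at hroot
    have hππ : π + π⁻¹ = emb x - 2 := by
      field_simp
      linear_combination hroot
    have hstep1 : ∀ σ ∈ S, emb x - (σ + 2 + σ⁻¹) = (-σ⁻¹) * ((σ - π) * (σ - π⁻¹)) := by
      intro σ hσ
      have hσ0 := hSne0 σ hσ
      have hfactor : (σ - π) * (σ - π⁻¹) = σ ^ 2 - (emb x - 2) * σ + 1 := by
        linear_combination (-σ) * hππ + mul_inv_cancel₀ hπ0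
      rw [hfactor]
      field_simp
      ring
    have hneg1 : ((-1:K)) ^ S.card = 1 := by
      rw [hScard, hnk, pow_mul, neg_one_sq, one_pow]
    have hb : ∏ σ ∈ S, (σ - π) = π ^ n + 1 := by
      calc ∏ σ ∈ S, (σ - π) = ∏ σ ∈ S, ((-1) * (π - σ)) := by
            apply Finset.prod_congr rfl; intros; ring
        _ = ((-1:K) ^ S.card) * ∏ σ ∈ S, (π - σ) := by
            rw [Finset.prod_mul_distrib, Finset.prod_const]
        _ = π ^ n + 1 := by rw [hneg1, one_mul, hSprod]
    have hc : ∏ σ ∈ S, (σ - π⁻¹) = (π⁻¹) ^ n + 1 := by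
      calc ∏ σ ∈ S, (σ - π⁻¹) = ∏ σ ∈ S, ((-1) * (π⁻¹ - σ)) := by
            apply Finset.prod_congr rfl; intros; ring
        _ = ((-1:K) ^ S.card) * ∏ σ ∈ S, (π⁻¹ - σ) := by
            rw [Finset.prod_mul_distrib, Finset.prod_const]
        _ = (π⁻¹) ^ n + 1 := by rw [hneg1, one_mul, hSprod]
    have ha : ∏ σ ∈ S, (-σ⁻¹ : K) = 1 := by
      calc ∏ σ ∈ S, (-σ⁻¹ : K) = ∏ σ ∈ S, ((-1) * σ⁻¹) := by
            apply Finset.prod_congr rfl; intros; ring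
        _ = ((-1:K) ^ S.card) * ∏ σ ∈ S, σ⁻¹ := by
            rw [Finset.prod_mul_distrib, Finset.prod_const]
        _ = ∏ σ ∈ S, σ⁻¹ := by rw [hneg1, one_mul]
        _ = (∏ σ ∈ S, σ)⁻¹ := by rw [← Finset.prod_inv_distrib]
        _ = 1 := by rw [hSprodid, inv_one]
    have hprod1 : ∏ σ ∈ S, (emb x - (σ + 2 + σ⁻¹))
        = (π ^ n + 1) * ((π⁻¹) ^ n + 1) := by
      calc ∏ σ ∈ S, (emb x - (σ + 2 + σ⁻¹))
          = ∏ σ ∈ S, ((-σ⁻¹) * ((σ - π) * (σ - π⁻¹))) :=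
            Finset.prod_congr rfl hstep1
        _ = (∏ σ ∈ S, (-σ⁻¹ : K)) * ∏ σ ∈ S, ((σ - π) * (σ - π⁻¹)) :=
            Finset.prod_mul_distrib
        _ = (∏ σ ∈ S, (-σ⁻¹ : K)) * ((∏ σ ∈ S, (σ - π)) * ∏ σ ∈ S, (σ - π⁻¹)) := by
            rw [Finset.prod_mul_distrib]
        _ = (π ^ n + 1) * ((π⁻¹) ^ n + 1) := by rw [ha, hb, hc, one_mul]
    have hdick : (π ^ n + 1) * ((π⁻¹) ^ n + 1)
        = (dickson 1 (1:K) n).eval (emb x - 2) + 2 := by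
      rw [← hππ, dickson_one_one_eval_add_inv π π⁻¹ (mul_inv_cancel₀ hπ0) n]
      have hone : π ^ n * (π⁻¹) ^ n = 1 := by
        rw [← mul_pow, mul_inv_cancel₀ hπ0, one_pow]
      linear_combination hone
    have hprod2 : ∏ σ ∈ S, (emb x - (σ + 2 + σ⁻¹))
        = (emb (∏ u ∈ A, (x - u))) ^ 2 := by
      calc ∏ σ ∈ S, (emb x - (σ + 2 + σ⁻¹))
          = ∏ v ∈ S.image (fun σ : K => σ + 2 + σ⁻¹), (emb x - v)
              ^ (S.filter (fun σ : K => σ + 2 + σ⁻¹ = v)).card :=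
            Finset.prod_comp (fun v => emb x - v) (fun σ : K => σ + 2 + σ⁻¹)
        _ = ∏ v ∈ S.image (fun σ : K => σ + 2 + σ⁻¹), (emb x - v) ^ 2 :=
            Finset.prod_congr rfl (fun v hv => by rw [hfibcard v hv])
        _ = ∏ v ∈ A.image (fun u => emb u), (emb x - v) ^ 2 := by rw [himg]
        _ = ∏ u ∈ A, (emb x - emb u) ^ 2 :=
            Finset.prod_image (fun a _ b _ h => hembinj h)
        _ = (emb (∏ u ∈ A, (x - u))) ^ 2 := by
            rw [map_prod, ← Finset.prod_pow]
            apply Finset.prod_congr rfl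
            intro u _
            rw [map_sub]
    have hmap : (dickson 1 (1:K) n).eval (emb x - 2)
        = emb ((dickson 1 (1:F) n).eval (x - 2)) := by
      have h1 : (dickson 1 (1:F) n).map (algebraMap F (AlgebraicClosure F))
          = dickson 1 (1:K) n := by
        rw [map_dickson]; norm_num
      have h2 : emb x - 2 = emb (x - 2) := by rw [map_sub, map_ofNat]
      rw [← h1, h2, eval_map, eval₂_at_apply]
    have hfinal : emb ((∏ u ∈ A, (x - u)) ^ 2)
        = emb ((dickson 1 (1:F) n).eval (x - 2) + 2) := by
      rw [map_pow, ← hprod2, hprod1, hdick, hmap, map_add, map_ofNat]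
    exact hembinj hfinal
  -- assembling the polynomial identity
  set FA : F[X] := ∏ u ∈ A, (X - C u) with hFAdef
  have hFAmonic : FA.Monic := monic_prod_of_monic _ _ (fun u _ => monic_X_sub_C u)
  have hFAeval : ∀ x : F, FA.eval x = ∏ u ∈ A, (x - u) := by
    intro x
    rw [hFAdef, eval_prod]
    apply Finset.prod_congr rfl
    intros
    rw [eval_sub, eval_X, eval_C]
  have hFAdeg : FA.natDegree = k := by
    rw [hFAdef, natDegree_prod _ _ (fun u _ => X_sub_C_ne_zero u)]
    rw [Finset.sum_congr rfl (fun u _ => natDegree_X_sub_C u), Finset.sum_const,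
      smul_eq_mul, mul_one, hAcard]
  obtain ⟨hdkmon, hdkdeg⟩ := dickson_monic_natDegree (1:F) (k-1)
  have hk1 : k - 1 + 1 = k := by omega
  rw [hk1] at hdkmon hdkdeg
  set G : F[X] := (dickson 1 (1:F) k).comp (X - C 2) with hGdef
  have hGmonic : G.Monic := hdkmon.comp_X_sub_C 2
  have hGeval : ∀ x : F, G.eval x = (dickson 1 (1:F) k).eval (x - 2) := by
    intro x
    rw [hGdef, eval_comp, eval_sub, eval_X, eval_C]
  have hGsq : ∀ x : F, (G.eval x) ^ 2 = (dickson 1 (1:F) n).eval (x - 2) + 2 := by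
    intro x
    have hmul : dickson 1 (1:F) n = (dickson 1 (1:F) 2).comp (dickson 1 (1:F) k) := by
      rw [hnk]; exact dickson_one_one_mul F 2 k
    rw [hGeval x, hmul, eval_comp, dickson_two]
    simp only [eval_sub, eval_pow, eval_X, eval_mul, eval_C, eval_ofNat, eval_natCast]
    push_cast
    ring
  have hpoly : FA ^ 2 = G ^ 2 := by
    have hzero : FA ^ 2 - G ^ 2 = 0 := by
      apply eq_zero_of_natDegree_lt_card_of_eval_eq_zero' _ Finset.univ
      · intro x _
        rw [eval_sub, eval_pow, eval_pow, hFAeval, hpoint x, hGsq x, sub_self]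
      · have hGdeg : G.natDegree = k := by
          rw [hGdef, natDegree_comp, hdkdeg, natDegree_X_sub_C, mul_one]
        have h1 : (FA ^ 2 - G ^ 2).natDegree ≤ n :=
          le_trans (natDegree_sub_le _ _) (by
            rw [natDegree_pow, natDegree_pow, hFAdeg, hGdeg, max_self]
            omega)
        calc (FA ^ 2 - G ^ 2).natDegree ≤ n := h1
          _ < Fintype.card F := hnq
          _ = Finset.univ.card := Finset.card_univ.symm
    exact sub_eq_zero.mp hzero
  have hFG : FA = G := by
    have hcases : FA = G ∨ FA = -G := by
      have h := hpoly
      rw [pow_two, pow_two] at h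
      exact mul_self_eq_mul_self_iff.mp h
    rcases hcases with h | h
    · exact h
    · exfalso
      have h2 : (-G).leadingCoeff = -1 := by
        rw [leadingCoeff_neg, hGmonic.leadingCoeff]
      have h3 : (-1 : F) = 1 := by rw [← h2, ← h]; exact hFAmonic
      exact h2F (by linear_combination -h3)
  -- final computation
  have hTs : ∏ a ∈ Finset.univ.filter
      (fun a : F => a ≠ 0 ∧ ¬ IsSquare (1 - a) ∧ ¬ IsSquare (a + 3)), a
      = ∏ u ∈ A, (1 - u) := by
    refine Finset.prod_bij' (fun a _ => 1 - a) (fun u _ => 1 - u) ?_ ?_ ?_ ?_ ?_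
    · intro a ha
      obtain ⟨-, ha0, ha1, ha2⟩ := Finset.mem_filter.mp ha
      refine Finset.mem_filter.mpr ⟨Finset.mem_univ _, ha1, ?_⟩
      have h4 : (4 : F) - (1 - a) = a + 3 := by ring
      rw [h4]; exact ha2
    · intro u hu
      obtain ⟨-, hu1, hu2⟩ := Finset.mem_filter.mp hu
      refine Finset.mem_filter.mpr ⟨Finset.mem_univ _, ?_, ?_, ?_⟩
      · intro h
        apply hu1
        have h1 : u = 1 := by linear_combination -h
        rw [h1]; exact ⟨1, by ring⟩
      · have h1 : (1: F) - (1 - u) = u := by ring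
        rw [h1]; exact hu1
      · have h1 : (1: F) - u + 3 = 4 - u := by ring
        rw [h1]; exact hu2
    · intro a ha; ring
    · intro u hu; ring
    · intro a ha; ring
  rw [hTs, ← hFAeval 1, hFG, hGeval 1]
  have h12 : (1:F) - 2 = -1 := by ring
  rw [h12, dickson_eval_neg_one]

end Aux

end ProdNS

/-- The product of all nonzero `a ∈ F_q` such that both `1 - a` and
`a + 3` are nonsquares in `F_q` equals `2` if `q ≡ ±1 (mod 12)`, and `-1` otherwise. -/
theorem prod_nonsquares_mod_twelve {F : Type*} [Field F] [Fintype F]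
    (hq : Odd (Fintype.card F)) :
    ∏ a ∈ Finset.univ.filter
        (fun a : F => a ≠ 0 ∧ ¬ IsSquare (1 - a) ∧ ¬ IsSquare (a + 3)), a =
      if Fintype.card F % 12 = 1 ∨ Fintype.card F % 12 = 11 then (2 : F) else -1 := by
  classical
  have hqmod2 : Fintype.card F % 2 = 1 := Nat.odd_iff.mp hq
  have hq1 : 1 < Fintype.card F := Fintype.one_lt_card
  have hq2 : ringChar F ≠ 2 := by
    intro h
    have := FiniteField.even_card_of_char_two h
    omega
  rcases (by omega : Fintype.card F % 4 = 1 ∨ Fintype.card F % 4 = 3) with h4 | h4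
  · have hsq : IsSquare (-1 : F) ↔ (1 : ℤ) = 1 := by
      constructor
      · intro _; rfl
      · intro _
        exact (FiniteField.isSquare_neg_one_iff).mpr (by omega)
    have h := ProdNS.aux (F := F) (Fintype.card F / 2) (Fintype.card F / 4) 1
      (by omega) (by omega) (Or.inl rfl) (by push_cast; omega) hsq hq2
    rw [h]
    by_cases h3 : Fintype.card F / 4 % 3 = 0
    · rw [if_pos h3, if_pos (by omega)]
    · rw [if_neg h3, if_neg (by omega)]
  · have hsq : IsSquare (-1 : F) ↔ (-1 : ℤ) = 1 := by
      constructor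
      · intro hh
        exact absurd h4 ((FiniteField.isSquare_neg_one_iff).mp hh)
      · intro hh; norm_num at hh
    have h := ProdNS.aux (F := F) ((Fintype.card F + 1) / 2) ((Fintype.card F + 1) / 4) (-1)
      (by omega) (by omega) (Or.inr rfl) (by push_cast; omega) hsq hq2
    rw [h]
    by_cases h3 : (Fintype.card F + 1) / 4 % 3 = 0
    · rw [if_pos h3, if_pos (by omega)]
    · rw [if_neg h3, if_neg (by omega)]
end

section
/- Suppose s, t ∈ F_q are nonzero and s^2 + t^2 = 4. Then the product of all a ∈ F_q such that both s^2 - a and t^2 + a are nonsquares in F_q equals χ(2 + s) · 2, and also equals χ(2) · χ(2 + t) · 2. -/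
open scoped Classical

section Aux

open Polynomial

set_option linter.unusedSectionVars false
set_option linter.unusedVariables false

variable {F : Type*} [Field F] [Fintype F]


lemma isSquare_sq_mul_iff {c : F} (x : F) (hc : c ≠ 0) : IsSquare (c ^ 2 * x) ↔ IsSquare x := by
  constructor
  · rintro ⟨r, hr⟩
    refine ⟨r / c, ?_⟩
    field_simp
    linear_combination hr
  · rintro ⟨r, hr⟩
    exact ⟨c * r, by rw [hr]; ring⟩

lemma chi_cast (hF : ringChar F ≠ 2) {a : F} (ha : a ≠ 0) :
    ((χ a : ℤ) : F) = a ^ (Fintype.card F / 2) := by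
  unfold χ
  rw [if_neg ha]
  by_cases h : IsSquare a
  · rw [if_pos h, (FiniteField.isSquare_iff hF ha).1 h]
    norm_num
  · rw [if_neg h,
      (FiniteField.pow_dichotomy hF ha).resolve_left
        (fun hh => h ((FiniteField.isSquare_iff hF ha).2 hh))]
    norm_num



lemma card_nonsquares (hF : ringChar F ≠ 2) :
    (Finset.univ.filter (fun v : F => ¬ IsSquare v)).card = Fintype.card F / 2 := by
  have hq1 : Fintype.card F % 2 = 1 := FiniteField.odd_card_of_char_ne_two hF
  have hq3 : 3 ≤ Fintype.card F := by have := Fintype.one_lt_card (α := F); omega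
  have hm0 : Fintype.card F / 2 ≠ 0 := by omega
  set A := Finset.univ.filter (fun v : F => ¬ IsSquare v) with hA
  set B := Finset.univ.filter (fun v : F => v ≠ 0 ∧ IsSquare v) with hB
  have hAroots : A.val ⊆ (X ^ (Fintype.card F / 2) + C (1:F)).roots := by
    intro v hv
    rw [Polynomial.mem_roots (monic_X_pow_add_C (1:F) hm0).ne_zero]
    rw [hA, Finset.mem_val, Finset.mem_filter] at hv
    have hv0 : v ≠ 0 := fun h => hv.2 (by rw [h]; exact IsSquare.zero)
    have := (FiniteField.pow_dichotomy hF hv0).resolve_left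
      (fun h => hv.2 ((FiniteField.isSquare_iff hF hv0).2 h))
    simp [Polynomial.IsRoot, this]
  have hBroots : B.val ⊆ (X ^ (Fintype.card F / 2) + C (-1:F)).roots := by
    intro v hv
    rw [Polynomial.mem_roots (monic_X_pow_add_C (-1:F) hm0).ne_zero]
    rw [hB, Finset.mem_val, Finset.mem_filter] at hv
    have := (FiniteField.isSquare_iff hF hv.2.1).1 hv.2.2
    simp [Polynomial.IsRoot, this]
  have hcA : A.card ≤ Fintype.card F / 2 := by
    have := card_le_degree_of_subset_roots hAroots
    rwa [natDegree_X_pow_add_C] at this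
  have hcB : B.card ≤ Fintype.card F / 2 := by
    have := card_le_degree_of_subset_roots hBroots
    rwa [natDegree_X_pow_add_C] at this
  have hins : Finset.univ.filter (fun v : F => IsSquare v) = insert (0:F) B := by
    ext v
    simp only [hB, Finset.mem_filter, Finset.mem_univ, true_and, Finset.mem_insert]
    by_cases h0 : v = 0
    · simp [h0, IsSquare.zero]
    · simp [h0]
  have h0B : (0:F) ∉ B := by simp [hB]
  have hsplit := Finset.card_filter_add_card_filter_not
    (s := (Finset.univ : Finset F)) (fun v : F => IsSquare v)
  rw [hins, Finset.card_insert_of_notMem h0B, Finset.card_univ] at hsplit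
  rw [← hA] at hsplit
  omega



lemma prod_X_sub_C_nonsquares (hF : ringChar F ≠ 2) :
    ∏ v ∈ Finset.univ.filter (fun v : F => ¬ IsSquare v), (X - C v)
      = X ^ (Fintype.card F / 2) + C (1:F) := by
  have hq1 : Fintype.card F % 2 = 1 := FiniteField.odd_card_of_char_ne_two hF
  have hq3 : 3 ≤ Fintype.card F := by have := Fintype.one_lt_card (α := F); omega
  have hm0 : Fintype.card F / 2 ≠ 0 := by omega
  set A := Finset.univ.filter (fun v : F => ¬ IsSquare v) with hA
  have hAroots : A.val ⊆ (X ^ (Fintype.card F / 2) + C (1:F)).roots := by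
    intro v hv
    rw [Polynomial.mem_roots (monic_X_pow_add_C (1:F) hm0).ne_zero]
    rw [hA, Finset.mem_val, Finset.mem_filter] at hv
    have hv0 : v ≠ 0 := fun h => hv.2 (by rw [h]; exact IsSquare.zero)
    have := (FiniteField.pow_dichotomy hF hv0).resolve_left
      (fun h => hv.2 ((FiniteField.isSquare_iff hF hv0).2 h))
    simp [Polynomial.IsRoot, this]
  have hdvd : (∏ v ∈ A, (X - C v)) ∣ X ^ (Fintype.card F / 2) + C (1:F) := by
    have := (Multiset.prod_X_sub_C_dvd_iff_le_roots
      (monic_X_pow_add_C (1:F) hm0).ne_zero A.val).2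
      (Finset.val_le_iff_val_subset.2 hAroots)
    rwa [← Finset.prod_eq_multiset_prod] at this
  have hmonicP : (∏ v ∈ A, (X - C v)).Monic :=
    monic_prod_of_monic _ _ (fun i _ => monic_X_sub_C i)
  have hdegP : (∏ v ∈ A, (X - C v)).natDegree = Fintype.card F / 2 := by
    rw [natDegree_prod _ _ (fun i _ => X_sub_C_ne_zero i)]
    simp [natDegree_X_sub_C]
    exact card_nonsquares hF
  obtain ⟨c, hc⟩ := hdvd
  have hcne : c ≠ 0 := by
    rintro rfl
    rw [mul_zero] at hc
    exact (monic_X_pow_add_C (1:F) hm0).ne_zero hc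
  have hdeg : Fintype.card F / 2 = Fintype.card F / 2 + c.natDegree := by
    have := congrArg natDegree hc
    rwa [natDegree_X_pow_add_C, natDegree_mul hmonicP.ne_zero hcne, hdegP] at this
  have hcm : c.Monic := by
    have := congrArg leadingCoeff hc
    rw [(monic_X_pow_add_C (1:F) hm0).leadingCoeff, leadingCoeff_mul,
      hmonicP.leadingCoeff, one_mul] at this
    exact this.symm
  have hc1 : c = 1 := eq_one_of_monic_natDegree_zero hcm (by omega)
  rw [hc, hc1, mul_one]

lemma prod_sub_nonsquares (hF : ringChar F ≠ 2) (c : F) :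
    ∏ v ∈ Finset.univ.filter (fun v : F => ¬ IsSquare v), (c - v)
      = c ^ (Fintype.card F / 2) + 1 := by
  have := congrArg (Polynomial.eval c) (prod_X_sub_C_nonsquares hF)
  simpa [Polynomial.eval_prod] using this



lemma prod_erase_neg_one (hF : ringChar F ≠ 2) (h1 : ¬ IsSquare (-1 : F)) :
    ∏ v ∈ (Finset.univ.filter (fun v : F => ¬ IsSquare v)).erase (-1), ((-1 : F) - v)
      = ((Fintype.card F / 2 : ℕ) : F) := by
  have hq1 : Fintype.card F % 2 = 1 := FiniteField.odd_card_of_char_ne_two hF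
  have hq4 : Fintype.card F % 4 = 3 := by
    have := (not_iff_not.2 (FiniteField.isSquare_neg_one_iff (F := F))).1 h1
    omega
  have hmodd : (Fintype.card F / 2) % 2 = 1 := by omega
  have hmem : (-1 : F) ∈ Finset.univ.filter (fun v : F => ¬ IsSquare v) := by
    simp [h1]
  set E := (Finset.univ.filter (fun v : F => ¬ IsSquare v)).erase (-1) with hE
  set g : F[X] := ∏ v ∈ E, (X - C v) with hg
  have hfac : X ^ (Fintype.card F / 2) + C (1:F) = (X - C (-1)) * g := by
    rw [← prod_X_sub_C_nonsquares hF, ← Finset.mul_prod_erase _ _ hmem]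
  have hd := congrArg derivative hfac
  rw [derivative_add, derivative_X_pow, derivative_C, add_zero, derivative_mul,
    derivative_sub, derivative_X, derivative_C, sub_zero, one_mul] at hd
  have he := congrArg (Polynomial.eval (-1 : F)) hd
  simp only [eval_mul, eval_add, eval_sub, eval_X, eval_C, eval_pow, eval_natCast] at he
  rw [sub_neg_eq_add, neg_add_cancel, zero_mul, add_zero] at he
  have hpow : (-1 : F) ^ (Fintype.card F / 2 - 1) = 1 := by
    have : Even (Fintype.card F / 2 - 1) := by
      rw [Nat.even_iff]; omega
    exact this.neg_one_pow
  rw [hpow, mul_one] at he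
  have hev : Polynomial.eval (-1:F) g = ∏ v ∈ E, ((-1:F) - v) := by
    rw [hg, Polynomial.eval_prod]
    simp
  rw [← hev]
  exact he.symm



lemma fiber_eq (hF : ringChar F ≠ 2) :
    ∀ x ∈ Finset.univ.filter (fun x : F => ¬ IsSquare x ∧ IsSquare (4 - x)),
      ∃ r : F, r ≠ -r ∧ r * r = 4 - x ∧
        ((Finset.univ.filter (fun y : F => ¬ IsSquare (4 - y^2))).filter
          (fun y => 4 - y^2 = x)) = {r, -r} := by
  intro x hx
  rw [Finset.mem_filter] at hx
  obtain ⟨-, hxns, hxsq⟩ := hx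
  obtain ⟨r, hr⟩ := hxsq
  have hr0 : r ≠ 0 := by
    rintro rfl
    rw [mul_zero] at hr
    exact hxns ⟨2, by linear_combination -hr⟩
  have hrne : r ≠ -r := by
    intro h
    have h2 : (2 : F) ≠ 0 := Ring.two_ne_zero hF
    apply hr0
    have : (2:F) * r = 0 := by linear_combination h
    rcases mul_eq_zero.1 this with h' | h'
    · exact absurd h' h2
    · exact h'
  refine ⟨r, hrne, hr.symm, ?_⟩
  ext y
  rw [Finset.filter_filter, Finset.mem_filter, Finset.mem_insert, Finset.mem_singleton]
  constructor
  · rintro ⟨-, -, hy⟩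
    have : y ^ 2 = r ^ 2 := by linear_combination hr - hy
    rcases sq_eq_sq_iff_eq_or_eq_neg.1 this with h | h
    · exact Or.inl h
    · exact Or.inr h
  · intro h
    have hyx : 4 - y ^ 2 = x := by
      rcases h with h | h <;> rw [h] <;> linear_combination hr
    refine ⟨Finset.mem_univ y, ?_, hyx⟩
    rw [hyx]
    exact hxns

lemma step_fiber (hF : ringChar F ≠ 2) (s t : F) (hst : s^2 + t^2 = 4) :
    ∏ y ∈ Finset.univ.filter (fun y : F => ¬ IsSquare (4 - y^2)), (t - y)
      = ∏ x ∈ Finset.univ.filter (fun x : F => ¬ IsSquare x ∧ IsSquare (4 - x)), (x - s^2) := by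
  have hmaps : ∀ y ∈ Finset.univ.filter (fun y : F => ¬ IsSquare (4 - y^2)),
      (4 - y^2) ∈ Finset.univ.filter (fun x : F => ¬ IsSquare x ∧ IsSquare (4 - x)) := by
    intro y hy
    rw [Finset.mem_filter] at hy ⊢
    refine ⟨Finset.mem_univ _, hy.2, ⟨y, by ring⟩⟩
  rw [← Finset.prod_fiberwise_of_maps_to hmaps (fun y => t - y)]
  apply Finset.prod_congr rfl
  intro x hx
  obtain ⟨r, hrne, hrr, hfib⟩ := fiber_eq hF x hx
  rw [hfib, Finset.prod_pair hrne]
  linear_combination hst - hrr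

lemma step_card (hF : ringChar F ≠ 2) :
    (Finset.univ.filter (fun y : F => ¬ IsSquare (4 - y^2))).card
      = 2 * (Finset.univ.filter (fun x : F => ¬ IsSquare x ∧ IsSquare (4 - x))).card := by
  have hmaps : ∀ y ∈ Finset.univ.filter (fun y : F => ¬ IsSquare (4 - y^2)),
      (4 - y^2) ∈ Finset.univ.filter (fun x : F => ¬ IsSquare x ∧ IsSquare (4 - x)) := by
    intro y hy
    rw [Finset.mem_filter] at hy ⊢
    refine ⟨Finset.mem_univ _, hy.2, ⟨y, by ring⟩⟩
  rw [Finset.card_eq_sum_card_fiberwise hmaps]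
  rw [Finset.sum_congr rfl (fun x hx => ?_), Finset.sum_const, smul_eq_mul, mul_comm]
  obtain ⟨r, hrne, hrr, hfib⟩ := fiber_eq hF x hx
  rw [hfib, Finset.card_insert_of_notMem (by simpa using hrne), Finset.card_singleton]



lemma step_mobius (hF : ringChar F ≠ 2) (t : F) :
    (∏ y ∈ Finset.univ.filter (fun y : F => ¬ IsSquare (4 - y^2)), (t - y)
      = ∏ v ∈ (Finset.univ.filter (fun v : F => ¬ IsSquare v)).erase (-1),
          (((t-2)*v + (t+2))/(v+1)))
    ∧ (Finset.univ.filter (fun y : F => ¬ IsSquare (4 - y^2))).card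
      = ((Finset.univ.filter (fun v : F => ¬ IsSquare v)).erase (-1)).card := by
  have h2 : (2:F) ≠ 0 := Ring.two_ne_zero hF
  have h4 : (4:F) ≠ 0 := by
    intro h
    exact h2 (by rcases mul_eq_zero.1 (show (2:F) * 2 = 0 by linear_combination h) with h' | h' <;> exact h')
  have hi : ∀ y ∈ Finset.univ.filter (fun y : F => ¬ IsSquare (4 - y^2)),
      (2+y)/(2-y) ∈ (Finset.univ.filter (fun v : F => ¬ IsSquare v)).erase (-1) := by
    intro y hy
    rw [Finset.mem_filter] at hy
    have hyns := hy.2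
    have hy2 : (2:F) - y ≠ 0 := by
      intro h
      exact hyns ⟨0, by linear_combination (y + 2) * h⟩
    have hy2' : (2:F) + y ≠ 0 := by
      intro h
      exact hyns ⟨0, by linear_combination (2 - y) * h⟩
    rw [Finset.mem_erase, Finset.mem_filter]
    refine ⟨?_, Finset.mem_univ _, ?_⟩
    · intro h
      apply h4
      have := congrArg (fun z => z * (2 - y)) h
      rw [div_mul_cancel₀ _ hy2] at this
      linear_combination this
    · intro hv
      apply hyns
      rw [show (4 : F) - y^2 = (2-y)^2 * ((2+y)/(2-y)) by field_simp; ring]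
      exact (isSquare_sq_mul_iff _ hy2).2 hv
  have hj : ∀ v ∈ (Finset.univ.filter (fun v : F => ¬ IsSquare v)).erase (-1),
      2*(v-1)/(v+1) ∈ Finset.univ.filter (fun y : F => ¬ IsSquare (4 - y^2)) := by
    intro v hv
    rw [Finset.mem_erase, Finset.mem_filter] at hv
    obtain ⟨hv1, -, hvns⟩ := hv
    have hv1' : v + 1 ≠ 0 := fun h => hv1 (by linear_combination h)
    rw [Finset.mem_filter]
    refine ⟨Finset.mem_univ _, ?_⟩
    intro hsq
    apply hvns
    rw [show (4:F) - (2*(v-1)/(v+1))^2 = (4/(v+1))^2 * v by field_simp; ring] at hsq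
    exact (isSquare_sq_mul_iff _ (div_ne_zero h4 hv1')).1 hsq
  have hji : ∀ y ∈ Finset.univ.filter (fun y : F => ¬ IsSquare (4 - y^2)),
      2*((2+y)/(2-y) - 1)/((2+y)/(2-y) + 1) = y := by
    intro y hy
    rw [Finset.mem_filter] at hy
    have hy2 : (2:F) - y ≠ 0 := by
      intro h
      exact hy.2 ⟨0, by linear_combination (y + 2) * h⟩
    show 2*((2+y)/(2-y) - 1)/((2+y)/(2-y) + 1) = y
    have hnum : (2+y)/(2-y) - 1 = 2*y/(2-y) := by field_simp; ring
    have hden : (2+y)/(2-y) + 1 = 4/(2-y) := by field_simp; ring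
    rw [hnum, hden]
    field_simp [h4]
    ring
  have hij : ∀ v ∈ (Finset.univ.filter (fun v : F => ¬ IsSquare v)).erase (-1),
      (2 + 2*(v-1)/(v+1))/(2 - 2*(v-1)/(v+1)) = v := by
    intro v hv
    rw [Finset.mem_erase, Finset.mem_filter] at hv
    have hv1' : v + 1 ≠ 0 := fun h => hv.1 (by linear_combination h)
    show (2 + 2*(v-1)/(v+1))/(2 - 2*(v-1)/(v+1)) = v
    have hnum : (2:F) + 2*(v-1)/(v+1) = 4*v/(v+1) := by field_simp; ring
    have hden : (2:F) - 2*(v-1)/(v+1) = 4/(v+1) := by field_simp; ring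
    rw [hnum, hden]
    field_simp [h4]
  have hval : ∀ y ∈ Finset.univ.filter (fun y : F => ¬ IsSquare (4 - y^2)),
      t - y = ((t-2)*((2+y)/(2-y)) + (t+2))/((2+y)/(2-y) + 1) := by
    intro y hy
    rw [Finset.mem_filter] at hy
    have hy2 : (2:F) - y ≠ 0 := by
      intro h
      exact hy.2 ⟨0, by linear_combination (y + 2) * h⟩
    have hden : (2+y)/(2-y) + 1 ≠ 0 := by
      rw [div_add' _ _ _ hy2]
      apply div_ne_zero _ hy2
      intro h
      exact h4 (by linear_combination h)
    show t - y = ((t-2)*((2+y)/(2-y)) + (t+2))/((2+y)/(2-y) + 1)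
    have hden2 : (2+y)/(2-y) + 1 = 4/(2-y) := by field_simp; ring
    rw [hden2]
    field_simp [h4]
    ring
  exact ⟨Finset.prod_nbij' (fun y => (2+y)/(2-y)) (fun v => 2*(v-1)/(v+1)) hi hj hji hij hval,
    Finset.card_nbij' (fun y => (2+y)/(2-y)) (fun v => 2*(v-1)/(v+1)) hi hj hji hij⟩



lemma pow_sq_half (hF : ringChar F ≠ 2) {a : F} (ha : a ≠ 0) :
    (a ^ 2) ^ (Fintype.card F / 2) = 1 := by
  have hq1 := FiniteField.odd_card_of_char_ne_two hF
  rw [← pow_mul, show 2 * (Fintype.card F / 2) = Fintype.card F - 1 by omega]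
  exact FiniteField.pow_card_sub_one_eq_one a ha

lemma R_val (hF : ringChar F ≠ 2) (s t : F) (hs : s ≠ 0) (ht : t ≠ 0)
    (hst : s^2 + t^2 = 4) :
    ∏ x ∈ Finset.univ.filter (fun x : F => ¬ IsSquare x ∧ IsSquare (4 - x)), (s^2 - x)
      = 2 ^ (Fintype.card F / 2) * (2 + t) ^ (Fintype.card F / 2) := by
  have hq1 := FiniteField.odd_card_of_char_ne_two hF
  have hq3 : 3 ≤ Fintype.card F := by have := Fintype.one_lt_card (α := F); omega
  have h2 : (2:F) ≠ 0 := Ring.two_ne_zero hF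
  have h4 : (4:F) ≠ 0 := by
    intro h
    exact h2 (by rcases mul_eq_zero.1 (show (2:F) * 2 = 0 by linear_combination h) with h' | h' <;> exact h')
  have h2t : (2:F) + t ≠ 0 := by
    intro h
    exact hs (sq_eq_zero_iff.1 (by linear_combination hst + (2 - t) * h))
  have h2t' : (2:F) - t ≠ 0 := by
    intro h
    exact hs (sq_eq_zero_iff.1 (by linear_combination hst + (2 + t) * h))
  set NS := Finset.univ.filter (fun v : F => ¬ IsSquare v) with hNS
  set E := NS.erase (-1) with hE
  set X' := Finset.univ.filter (fun x : F => ¬ IsSquare x ∧ IsSquare (4 - x)) with hX'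
  set Y' := Finset.univ.filter (fun y : F => ¬ IsSquare (4 - y^2)) with hY'
  set m := Fintype.card F / 2 with hm
  set d : F := (2+t)/(2-t) with hd
  have hs2 : s^2 = (2-t)*(2+t) := by linear_combination hst
  have hdsq : d = (s/(2-t))^2 := by
    rw [hd, div_pow, hs2, pow_two, mul_div_mul_left _ _ h2t']
  have hdm : d ^ m = 1 := by rw [hdsq]; exact pow_sq_half hF (div_ne_zero hs h2t')
  -- rewrite each Möbius factor
  have hfac : ∀ v ∈ E, ((t-2)*v + (t+2))/(v+1) = ((2-t)*(d - v)) / ((-1)*((-1) - v)) := by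
    intro v hv
    have : ((t-2)*v + (t+2)) = (2-t)*(d - v) := by
      rw [hd]; field_simp; ring
    rw [this]
    congr 1
    ring
  have hmob := (step_mobius hF t).1
  rw [← hNS, ← hE, ← hY'] at hmob
  rw [Finset.prod_congr rfl hfac, Finset.prod_div_distrib,
    Finset.prod_mul_distrib, Finset.prod_mul_distrib,
    Finset.prod_const, Finset.prod_const] at hmob
  -- fiber step
  have hfib := step_fiber hF s t hst
  rw [← hX', ← hY'] at hfib
  have hcard := step_card hF
  rw [← hX', ← hY'] at hcard
  have hcardY := (step_mobius hF t).2
  rw [← hNS, ← hE, ← hY'] at hcardY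
  -- turn ∏ (x - s²) into sign * goal product
  have hsign : ∏ x ∈ X', (x - s^2) = (-1:F)^X'.card * ∏ x ∈ X', (s^2 - x) := by
    rw [← Finset.prod_const, ← Finset.prod_mul_distrib]
    apply Finset.prod_congr rfl
    intro x _
    ring
  have hsq1 : ((-1:F)^X'.card) * ((-1:F)^X'.card) = 1 := by
    rw [← mul_pow]; norm_num
  -- facts to convert (2-t)^m to (2+t)^m
  have hAA : (2-t)^m * (2+t)^m = 1 := by
    rw [← mul_pow, show ((2:F)-t)*(2+t) = s^2 by linear_combination -hst]
    exact pow_sq_half hF hs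
  have hBB : (2+t)^m * (2+t)^m = 1 := by
    rw [← mul_pow, ← pow_two]
    exact pow_sq_half hF h2t
  have hconv : (2-t)^m = (2+t)^m := by
    linear_combination (2+t)^m * hAA - (2-t)^m * hBB
  have hdm' : d ^ (Fintype.card F / 2) = 1 := by rw [← hm]; exact hdm
  -- case split on IsSquare (-1)
  by_cases hn1 : IsSquare (-1 : F)
  · -- q % 4 = 1
    have hq4 : Fintype.card F % 4 = 1 := by
      have h43 := (FiniteField.isSquare_neg_one_iff (F := F)).1 hn1
      omega
    have hEN : E = NS := by
      rw [hE]
      apply Finset.erase_eq_of_notMem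
      rw [hNS]
      simp [hn1]
    have hcE : E.card = m := by rw [hEN, hNS, hm]; exact card_nonsquares hF
    have hprodd : ∏ v ∈ E, (d - v) = 2 := by
      rw [hEN, hNS, prod_sub_nonsquares hF d, hdm']
      norm_num
    have hmeven : (-1:F) ^ m = 1 := by
      apply Even.neg_one_pow
      rw [Nat.even_iff]
      omega
    have hprodn : ∏ v ∈ E, ((-1:F) - v) = 2 := by
      rw [hEN, hNS, prod_sub_nonsquares hF (-1), ← hm, hmeven]
      norm_num
    rw [hcE, hprodd, hprodn, hmeven, one_mul, mul_div_assoc,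
      div_self h2, mul_one] at hmob
    -- hmob : ∏ y ∈ Y', (t - y) = (2-t)^m
    have h0 : (2-t)^m = (-1:F)^X'.card * ∏ x ∈ X', (s^2 - x) := by
      rw [← hsign, ← hfib, hmob]
    have hP : ∏ x ∈ X', (s^2 - x) = (-1:F)^X'.card * (2-t)^m := by
      linear_combination (-(-1:F)^X'.card) * h0 - (∏ x ∈ X', (s^2 - x)) * hsq1
    have hc2 : 2 * X'.card = m := by
      rw [← hcard, hcardY, hcE]
    by_cases h8 : Fintype.card F % 8 = 1
    · have hsq2 : IsSquare (2:F) := (FiniteField.isSquare_two_iff).2 ⟨by omega, by omega⟩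
      have h2m : (2:F)^m = 1 := by rw [hm]; exact (FiniteField.isSquare_iff hF h2).1 hsq2
      have hcev : (-1:F)^X'.card = 1 := by
        apply Even.neg_one_pow
        rw [Nat.even_iff]
        omega
      rw [hP, hconv, hcev, h2m]
    · have h85 : Fintype.card F % 8 = 5 := by omega
      have hsq2 : ¬ IsSquare (2:F) := fun h => ((FiniteField.isSquare_two_iff).1 h).2 h85
      have h2m : (2:F)^m = -1 := by
        rw [hm]
        exact (FiniteField.pow_dichotomy hF h2).resolve_left
          (fun h => hsq2 ((FiniteField.isSquare_iff hF h2).2 h))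
      have hcodd : (-1:F)^X'.card = -1 := by
        apply Odd.neg_one_pow
        rw [Nat.odd_iff]
        omega
      rw [hP, hconv, hcodd, h2m]
  · -- q % 4 = 3
    have hq4 : Fintype.card F % 4 = 3 := by
      by_contra h
      exact hn1 ((FiniteField.isSquare_neg_one_iff (F := F)).2 h)
    have hmemN : (-1:F) ∈ NS := by
      rw [hNS]
      simp [hn1]
    have hcE : E.card = m - 1 := by
      rw [hE, Finset.card_erase_of_mem hmemN, hNS, hm, card_nonsquares hF]
    have hfull : ∏ v ∈ NS, (d - v) = 2 := by
      rw [hNS, prod_sub_nonsquares hF d, hdm']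
      norm_num
    have hsplit := Finset.mul_prod_erase NS (fun v => d - v) hmemN
    rw [← hE, hfull] at hsplit
    have hd1 : d - (-1) = 4/(2-t) := by
      rw [hd]
      field_simp
      ring
    rw [hd1] at hsplit
    have hprodd : ∏ v ∈ E, (d - v) = (2-t)/2 := by
      field_simp at hsplit
      rw [eq_div_iff h2]
      have hcc := mul_left_cancel₀ h2
        (show (2:F) * (2 * ∏ v ∈ E, (d - v)) = 2 * (2-t) by linear_combination hsplit)
      linear_combination hcc
    have hprodn : ∏ v ∈ E, ((-1:F) - v) = ((Fintype.card F / 2 : ℕ) : F) := by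
      rw [hE, hNS]
      exact prod_erase_neg_one hF hn1
    have hmcast : (2:F) * ((Fintype.card F / 2 : ℕ) : F) + 1 = 0 := by
      have hc0 : ((Fintype.card F : ℕ) : F) = 0 := FiniteField.cast_card_eq_zero F
      rw [show (Fintype.card F : ℕ) = 2 * (Fintype.card F / 2) + 1 from by omega] at hc0
      push_cast at hc0
      linear_combination hc0
    have hmne : ((Fintype.card F / 2 : ℕ) : F) ≠ 0 := by
      intro h
      rw [h] at hmcast
      simp at hmcast
    have hm1even : (-1:F) ^ E.card = 1 := by
      apply Even.neg_one_pow
      rw [Nat.even_iff, hcE]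
      omega
    rw [hprodd, hprodn, hm1even, one_mul, hcE] at hmob
    have hmobv : ∏ y ∈ Y', (t - y) = -(2-t)^m := by
      rw [hmob]
      rw [show (2-t)^(m-1) * ((2-t)/2) = (2-t)^m / 2 from by
        rw [← mul_div_assoc, ← pow_succ, show m-1+1 = m from by omega]]
      rw [div_div, show (2:F) * ((Fintype.card F / 2 : ℕ) : F) = -1 from by
        linear_combination hmcast]
      rw [div_neg, div_one]
    have h0 : -(2-t)^m = (-1:F)^X'.card * ∏ x ∈ X', (s^2 - x) := by
      rw [← hsign, ← hfib, hmobv]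
    have hP : ∏ x ∈ X', (s^2 - x) = -((-1:F)^X'.card * (2-t)^m) := by
      linear_combination (-(-1:F)^X'.card) * h0 - (∏ x ∈ X', (s^2 - x)) * hsq1
    have hc2 : 2 * X'.card = m - 1 := by
      rw [← hcard, hcardY, hcE]
    have hq3m : 3 ≤ Fintype.card F := hq3
    by_cases h8 : Fintype.card F % 8 = 3
    · have hsq2 : ¬ IsSquare (2:F) := fun h => ((FiniteField.isSquare_two_iff).1 h).1 h8
      have h2m : (2:F)^m = -1 := by
        rw [hm]
        exact (FiniteField.pow_dichotomy hF h2).resolve_left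
          (fun h => hsq2 ((FiniteField.isSquare_iff hF h2).2 h))
      have hcev : (-1:F)^X'.card = 1 := by
        apply Even.neg_one_pow
        rw [Nat.even_iff]
        omega
      rw [hP, hconv, hcev, h2m, one_mul]
      ring
    · have h87 : Fintype.card F % 8 = 7 := by omega
      have hsq2 : IsSquare (2:F) := (FiniteField.isSquare_two_iff).2 ⟨by omega, by omega⟩
      have h2m : (2:F)^m = 1 := by rw [hm]; exact (FiniteField.isSquare_iff hF h2).1 hsq2
      have hcodd : (-1:F)^X'.card = -1 := by
        apply Odd.neg_one_pow
        rw [Nat.odd_iff]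
        omega
      rw [hP, hconv, hcodd, h2m, one_mul]
      ring



end Aux

/-- Suppose `s, t ∈ F_q` are nonzero and `s² + t² = 4`. Then the product
of all `a ∈ F_q` such that both `s² - a` and `t² + a` are nonsquares equals `χ(2+s)·2`,
and also equals `χ(2)·χ(2+t)·2`. -/
theorem prod_nonsquares_pythagorean {F : Type*} [Field F] [Fintype F]
    (hq : Odd (Fintype.card F)) (s t : F) (hs : s ≠ 0) (ht : t ≠ 0)
    (hst : s ^ 2 + t ^ 2 = 4) :
    (∏ a ∈ Finset.univ.filter
        (fun a : F => ¬ IsSquare (s ^ 2 - a) ∧ ¬ IsSquare (t ^ 2 + a)), a) =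
        ((χ (2 + s) : ℤ) : F) * 2 ∧
    (∏ a ∈ Finset.univ.filter
        (fun a : F => ¬ IsSquare (s ^ 2 - a) ∧ ¬ IsSquare (t ^ 2 + a)), a) =
        ((χ (2 : F) : ℤ) : F) * ((χ (2 + t) : ℤ) : F) * 2 := by
  have hq1 : Fintype.card F % 2 = 1 := Nat.odd_iff.1 hq
  have hF : ringChar F ≠ 2 := by
    intro h
    have := FiniteField.even_card_of_char_two h
    omega
  have h2 : (2:F) ≠ 0 := Ring.two_ne_zero hF
  have h2s : (2:F) + s ≠ 0 := by
    intro h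
    exact ht (sq_eq_zero_iff.1 (by linear_combination hst + (2 - s) * h))
  have h2t : (2:F) + t ≠ 0 := by
    intro h
    exact hs (sq_eq_zero_iff.1 (by linear_combination hst + (2 - t) * h))
  set m := Fintype.card F / 2 with hm
  -- step 1 : reindex
  have hreindex : (∏ a ∈ Finset.univ.filter
        (fun a : F => ¬ IsSquare (s ^ 2 - a) ∧ ¬ IsSquare (t ^ 2 + a)), a)
      = ∏ x ∈ Finset.univ.filter (fun x : F => ¬ IsSquare x ∧ ¬ IsSquare (4 - x)), (s^2 - x) := by
    refine Finset.prod_nbij' (fun a => s^2 - a) (fun x => s^2 - x) ?_ ?_ ?_ ?_ ?_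
    · intro a ha
      rw [Finset.mem_filter] at ha ⊢
      refine ⟨Finset.mem_univ _, ha.2.1, ?_⟩
      rw [show (4:F) - (s^2 - a) = t^2 + a from by linear_combination -hst]
      exact ha.2.2
    · intro x hx
      rw [Finset.mem_filter] at hx ⊢
      refine ⟨Finset.mem_univ _, by rw [show s^2 - (s^2 - x) = x from by ring]; exact hx.2.1, ?_⟩
      rw [show t^2 + (s^2 - x) = 4 - x from by linear_combination hst]
      exact hx.2.2
    · intro a _; ring
    · intro x _; ring
    · intro a _; ring
  -- step 2 : split the nonsquare product
  have hsplit := Finset.prod_filter_mul_prod_filter_not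
    (Finset.univ.filter (fun v : F => ¬ IsSquare v)) (fun x => IsSquare (4 - x))
    (fun x => s^2 - x)
  rw [Finset.filter_filter, Finset.filter_filter] at hsplit
  have hfull : ∏ v ∈ Finset.univ.filter (fun v : F => ¬ IsSquare v), (s^2 - v) = 2 := by
    rw [prod_sub_nonsquares hF (s^2), pow_sq_half hF hs]
    norm_num
  rw [hfull] at hsplit
  have hR := R_val hF s t hs ht hst
  rw [← hm] at hR
  rw [hR] at hsplit
  -- hsplit : (2^m * (2+t)^m) * ∏_N (s² - x) = 2
  have hRR : ((2:F)^m * (2+t)^m) * ((2:F)^m * (2+t)^m) = 1 := by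
    rw [← mul_pow, ← mul_pow, ← pow_two]
    rw [hm]
    exact pow_sq_half hF (mul_ne_zero h2 h2t)
  have hP : ∏ x ∈ Finset.univ.filter (fun x : F => ¬ IsSquare x ∧ ¬ IsSquare (4 - x)), (s^2 - x)
      = 2^m * (2+t)^m * 2 := by
    linear_combination ((2:F)^m * (2+t)^m) * hsplit
      - (∏ x ∈ Finset.univ.filter (fun x : F => ¬ IsSquare x ∧ ¬ IsSquare (4 - x)), (s^2 - x)) * hRR
  have hPa : (∏ a ∈ Finset.univ.filter
        (fun a : F => ¬ IsSquare (s ^ 2 - a) ∧ ¬ IsSquare (t ^ 2 + a)), a)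
      = 2^m * (2+t)^m * 2 := by rw [hreindex, hP]
  -- χ-identity between the two forms
  have hid : (s+t+2)^2 = 2*((2+s)*(2+t)) := by linear_combination hst
  have h0 : s+t+2 ≠ 0 := by
    intro h
    have hz : (2:F)*((2+s)*(2+t)) = 0 := by rw [← hid, h]; ring
    rcases mul_eq_zero.1 hz with h' | h'
    · exact h2 h'
    · rcases mul_eq_zero.1 h' with h'' | h''
      · exact h2s h''
      · exact h2t h''
  have h1 : (2:F)^m * ((2+s)^m * (2+t)^m) = 1 := by
    have := pow_sq_half hF h0
    rw [hid, mul_pow, mul_pow, ← hm] at this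
    exact this
  have h3 : (2+s)^m * (2+s)^m = 1 := by
    rw [← mul_pow, ← pow_two, hm]
    exact pow_sq_half hF h2s
  have hkey : (2:F)^m * (2+t)^m = (2+s)^m := by
    linear_combination (2+s)^m * h1 - ((2:F)^m * (2+t)^m) * h3
  constructor
  · rw [chi_cast hF h2s, ← hm, hPa, hkey]
  · rw [chi_cast hF h2, chi_cast hF h2t, ← hm, hPa]
end
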